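/- arXiv:1304.6321 — 9 statements merged into one kernel-verified Lean document; each statement's English description precedes it below -/
import Mathlib

section
/- Let (T, B) be a tree decomposition of a finite graph G and let S ⊆ V(G). Then there exists a node t of T such that every connected component of G − B_t contains at most |S|/2 vertices of S. -/
open SimpleGraph

/-- `(T, bag)` is a tree decomposition of the graph `G`. -/
def IsTreeDecomp {V ι : Type} (G : SimpleGraph V) (T : SimpleGraph ι) (bag : ι → Set V) : Prop :=
  T.IsTree ∧
  (∀ v, ∃ i, v ∈ bag i) ∧
  (∀ u v, G.Adj u v → ∃ i, u ∈ bag i ∧ v ∈ bag i) ∧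
  (∀ v : V, (T.induce {i | v ∈ bag i}).Connected)

/-- `G` has treewidth at most `k`: it has a tree decomposition all of whose bags
have at most `k + 1` vertices. -/
def TreewidthAtMost {V : Type} (G : SimpleGraph V) (k : ℕ) : Prop :=
  ∃ (ι : Type) (T : SimpleGraph ι) (bag : ι → Set V),
    IsTreeDecomp G T bag ∧ ∀ i, (bag i).ncard ≤ k + 1

/-- Every connected component of `G − X` contains at most `|S|/2` vertices of `S`. -/
def BalancedSSep {V : Type} (G : SimpleGraph V) (S X : Set V) : Prop :=
  ∀ c : (G.induce Xᶜ).ConnectedComponent,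
    2 * ((Subtype.val '' c.supp) ∩ S).ncard ≤ S.ncard

/-- There is a walk from `i` to `j` in `T` avoiding the vertex `t`. -/
def Avoids {ι : Type} (T : SimpleGraph ι) (t i j : ι) : Prop :=
  ∃ w : T.Walk i j, t ∉ w.support

namespace Avoids

variable {ι : Type} {T : SimpleGraph ι} {t i j k : ι}

lemma symm (h : Avoids T t i j) : Avoids T t j i := by
  obtain ⟨w, hw⟩ := h
  exact ⟨w.reverse, by simpa using hw⟩

lemma trans (h : Avoids T t i j) (h' : Avoids T t j k) : Avoids T t i k := by
  obtain ⟨w, hw⟩ := h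
  obtain ⟨w', hw'⟩ := h'
  refine ⟨w.append w', ?_⟩
  rw [SimpleGraph.Walk.mem_support_append_iff]
  tauto

end Avoids

lemma walk_of_induce {ι : Type} {T : SimpleGraph ι} {s : Set ι} {a b : s}
    (w : (T.induce s).Walk a b) :
    ∃ w' : T.Walk a b, ∀ x ∈ w'.support, x ∈ s := by
  induction w with
  | nil => exact ⟨.nil, by simp⟩
  | @cons a c b h p ih =>
    obtain ⟨w', hw'⟩ := ih
    refine ⟨.cons (by simpa using h) w', ?_⟩
    intro x hx
    rw [SimpleGraph.Walk.support_cons, List.mem_cons] at hx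
    rcases hx with rfl | hx
    · exact a.2
    · exact hw' x hx

lemma uniq_nbr {ι : Type} {T : SimpleGraph ι} (hT : T.IsAcyclic) {t y y' : ι}
    (h1 : T.Adj t y) (h2 : T.Adj t y') (h3 : Avoids T t y y') : y = y' := by
  classical
  obtain ⟨w, hw⟩ := h3
  have hp : t ∉ w.toPath.val.support := fun h => hw (Walk.support_toPath_subset w h)
  have hpath : (Walk.cons h1 w.toPath.val).IsPath :=
    (Walk.cons_isPath_iff _ _).2 ⟨w.toPath.2, hp⟩
  have h2path : (Walk.cons h2 (Walk.nil)).IsPath := by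
    rw [Walk.cons_isPath_iff]
    refine ⟨Walk.IsPath.nil, by simpa using h2.ne⟩
  have heq := hT.path_unique ⟨Walk.cons h1 w.toPath.val, hpath⟩ ⟨Walk.cons h2 Walk.nil, h2path⟩
  have hlen : (Walk.cons h1 w.toPath.val).length = (Walk.cons h2 (Walk.nil)).length := by
    rw [Subtype.ext_iff] at heq
    simp only [] at heq
    rw [heq]
  simp only [Walk.length_cons, Walk.length_nil] at hlen
  exact Walk.eq_of_length_eq_zero (by omega : (w.toPath : T.Walk y y').length = 0)

lemma exists_first {ι : Type} {T : SimpleGraph ι} {t z : ι}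
    (p : T.Walk t z) (hp : p.IsPath) (hne : t ≠ z) :
    ∃ (y : ι) (q : T.Walk y z), T.Adj t y ∧ t ∉ q.support ∧ q.length + 1 = p.length ∧
      ∀ a ∈ q.support, a ∈ p.support := by
  cases p with
  | nil => exact absurd rfl hne
  | cons h q =>
    rw [Walk.cons_isPath_iff] at hp
    refine ⟨_, q, h, hp.2, by simp, ?_⟩
    intro a ha
    rw [Walk.support_cons]
    exact List.mem_cons_of_mem _ ha

theorem statement1 {V ι : Type} [Fintype V] (G : SimpleGraph V) (T : SimpleGraph ι)
    (bag : ι → Set V) (hdec : IsTreeDecomp G T bag) (S : Set V) :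
    ∃ t : ι, BalancedSSep G S (bag t) := by
  classical
  obtain ⟨htree, hcover, hedge, hconn⟩ := hdec
  by_contra hbad
  push_neg at hbad
  simp only [BalancedSSep, not_forall, not_le] at hbad
  -- hbad : ∀ t, ∃ c, S.ncard < 2 * ...
  -- membership in the image of a component support
  have memA : ∀ (t₀ : ι) (c₀ : (G.induce (bag t₀)ᶜ).ConnectedComponent) (v : V),
      v ∈ Subtype.val '' c₀.supp ↔
        ∃ h : v ∉ bag t₀, (G.induce (bag t₀)ᶜ).connectedComponentMk ⟨v, h⟩ = c₀ := by
    intro t₀ c₀ v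
    constructor
    · rintro ⟨⟨x, hx⟩, hxc, rfl⟩
      exact ⟨hx, (ConnectedComponent.mem_supp_iff _ _).1 hxc⟩
    · rintro ⟨h, hc⟩
      exact ⟨⟨v, h⟩, (ConnectedComponent.mem_supp_iff _ _).2 hc, rfl⟩
  have heavy_nonempty : ∀ (t₀ : ι) (c₀ : (G.induce (bag t₀)ᶜ).ConnectedComponent),
      S.ncard < 2 * ((Subtype.val '' c₀.supp) ∩ S).ncard →
      ((Subtype.val '' c₀.supp) ∩ S).Nonempty := by
    intro t₀ c₀ h
    rw [Set.nonempty_iff_ne_empty]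
    intro he
    rw [he] at h
    simp at h
  -- from the subtree condition: two bags of a vertex avoiding t are connected avoiding t
  have bagwalk : ∀ (t₀ : ι) (v : V), v ∉ bag t₀ → ∀ i j, v ∈ bag i → v ∈ bag j →
      Avoids T t₀ i j := by
    intro t₀ v hv i j hi hj
    obtain ⟨w⟩ := (hconn v).preconnected ⟨i, hi⟩ ⟨j, hj⟩
    obtain ⟨w', hw'⟩ := walk_of_induce w
    exact ⟨w', fun h => hv (hw' _ h)⟩
  have sidewalk : ∀ (t₀ : ι) (u v : V) (w : G.Walk u v), (∀ x ∈ w.support, x ∉ bag t₀) →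
      ∀ i j, u ∈ bag i → v ∈ bag j → Avoids T t₀ i j := by
    intro t₀ u v w
    induction w with
    | nil =>
      intro hs i j hi hj
      exact bagwalk t₀ _ (hs _ (by simp)) i j hi hj
    | @cons u y v h p ih =>
      intro hs i j hi hj
      obtain ⟨m, hum, hym⟩ := hedge u y h
      have h1 : Avoids T t₀ i m := bagwalk t₀ u (hs u (by simp)) i m hi hum
      have h2 : Avoids T t₀ m j := by
        refine ih (fun x hx => hs x ?_) m j hym hj
        rw [Walk.support_cons]
        exact List.mem_cons_of_mem _ hx
      exact h1.trans h2
  have reachwalk : ∀ (t₀ : ι) (u v : V) (hu : u ∈ (bag t₀)ᶜ) (hv : v ∈ (bag t₀)ᶜ),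
      (G.induce (bag t₀)ᶜ).Reachable ⟨u, hu⟩ ⟨v, hv⟩ →
      ∀ i j, u ∈ bag i → v ∈ bag j → Avoids T t₀ i j := by
    intro t₀ u v hu hv hr i j hi hj
    obtain ⟨w⟩ := hr
    obtain ⟨w', hw'⟩ := walk_of_induce w
    exact sidewalk t₀ u v w' (fun x hx => hw' x hx) i j hi hj
  -- distance decrease along the chosen neighbor
  have dist_lt : ∀ (t t' j : ι), T.Adj t t' → Avoids T t t' j → T.dist t' j < T.dist t j := by
    intro t t' j hadj hAv
    have htj : t ≠ j := by
      obtain ⟨w, hw⟩ := hAv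
      intro h
      exact hw (h ▸ Walk.end_mem_support w)
    have hne0 : T.dist t j ≠ 0 := (htree.isConnected.pos_dist_of_ne htj).ne'
    obtain ⟨w, hwlen⟩ := exists_walk_of_dist_ne_zero hne0
    obtain ⟨y, q, hady, hqt, hqlen, _⟩ := exists_first w.bypass w.bypass_isPath htj
    have hyt' : y = t' :=
      uniq_nbr htree.IsAcyclic hady hadj (Avoids.trans ⟨q, hqt⟩ (Avoids.symm hAv))
    subst hyt'
    have h1 : T.dist y j ≤ q.length := dist_le q
    have h2 : w.bypass.length ≤ w.length := Walk.length_bypass_le w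
    omega
  -- the key step
  have step : ∀ (t : ι) (c : (G.induce (bag t)ᶜ).ConnectedComponent),
      S.ncard < 2 * ((Subtype.val '' c.supp) ∩ S).ncard →
      ∃ (t' : ι) (c' : (G.induce (bag t')ᶜ).ConnectedComponent),
        T.Adj t t' ∧ (Subtype.val '' c'.supp) ⊆ (Subtype.val '' c.supp) ∧
        S.ncard < 2 * ((Subtype.val '' c'.supp) ∩ S).ncard ∧
        (∀ v ∈ Subtype.val '' c.supp, ∀ j, v ∈ bag j → Avoids T t t' j) := by
    intro t c hheavy
    obtain ⟨u₀, hu₀A, hu₀S⟩ := heavy_nonempty t c hheavy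
    have hnotbag : ∀ v ∈ Subtype.val '' c.supp, v ∉ bag t := by
      rintro v ⟨⟨x, hx⟩, _, rfl⟩
      exact hx
    have hreach : ∀ u v, u ∈ Subtype.val '' c.supp → v ∈ Subtype.val '' c.supp →
        ∀ i j, u ∈ bag i → v ∈ bag j → Avoids T t i j := by
      intro u v hu hv i j hi hj
      obtain ⟨hu', hcu⟩ := (memA t c u).1 hu
      obtain ⟨hv', hcv⟩ := (memA t c v).1 hv
      exact reachwalk t u v hu' hv' (ConnectedComponent.exact (hcu.trans hcv.symm)) i j hi hj
    obtain ⟨i₀, hi₀⟩ := hcover u₀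
    have hi₀t : t ≠ i₀ := fun h => hnotbag u₀ hu₀A (h ▸ hi₀)
    obtain ⟨w0⟩ := htree.isConnected.preconnected t i₀
    obtain ⟨t', q0, hadj, hq0t, _, _⟩ := exists_first w0.bypass w0.bypass_isPath hi₀t
    have hAv0 : Avoids T t t' i₀ := ⟨q0, hq0t⟩
    have hP : ∀ v ∈ Subtype.val '' c.supp, ∀ j, v ∈ bag j → Avoids T t t' j := by
      intro v hv j hj
      exact hAv0.trans (hreach u₀ v hu₀A hv i₀ j hi₀ hj)
    -- neighbors of the component inside bag t are also in bag t'
    have hbdry : ∀ x ∈ bag t, ∀ u ∈ Subtype.val '' c.supp, G.Adj u x → x ∈ bag t' := by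
      intro x hxt u huA hux
      obtain ⟨m, hum, hxm⟩ := hedge u x hux
      have hAvm : Avoids T t t' m := hP u huA m hum
      obtain ⟨w⟩ := (hconn x).preconnected ⟨m, hxm⟩ ⟨t, hxt⟩
      obtain ⟨w', hw'⟩ := walk_of_induce w
      have hps : ∀ a ∈ w'.reverse.bypass.support, x ∈ bag a := by
        intro a ha
        have h2 := Walk.support_bypass_subset _ ha
        rw [Walk.support_reverse] at h2
        exact hw' a (List.mem_reverse.1 h2)
      have htm : t ≠ m := fun h => hnotbag u huA (h ▸ hum)
      obtain ⟨y, q', hady, hq't, _, hq'sup⟩ :=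
        exists_first w'.reverse.bypass w'.reverse.bypass_isPath htm
      have hyt' : y = t' :=
        uniq_nbr htree.IsAcyclic hady hadj (Avoids.trans ⟨q', hq't⟩ (Avoids.symm hAvm))
      have hx' : x ∈ bag y := hps y (hq'sup y (Walk.start_mem_support q'))
      rwa [hyt'] at hx'
    obtain ⟨c', hheavy'⟩ := hbad t'
    refine ⟨t', c', hadj, ?_, hheavy', hP⟩
    -- show the new heavy component is contained in the old one
    have hmeet : ((Subtype.val '' c'.supp) ∩ (Subtype.val '' c.supp)).Nonempty := by
      by_contra hdis
      rw [Set.not_nonempty_iff_eq_empty] at hdis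
      have hdisj : Disjoint ((Subtype.val '' c'.supp) ∩ S) ((Subtype.val '' c.supp) ∩ S) := by
        rw [Set.disjoint_left]
        intro a ha ha'
        have : a ∈ (Subtype.val '' c'.supp) ∩ (Subtype.val '' c.supp) := ⟨ha.1, ha'.1⟩
        rw [hdis] at this
        exact this
      have hu := Set.ncard_union_eq hdisj (Set.toFinite _) (Set.toFinite _)
      have hsub : ((Subtype.val '' c'.supp) ∩ S) ∪ ((Subtype.val '' c.supp) ∩ S) ⊆ S := by
        rintro a (ha | ha) <;> exact ha.2
      have hle := Set.ncard_le_ncard hsub S.toFinite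
      omega
    obtain ⟨w₀, hw₀A', hw₀A⟩ := hmeet
    -- any walk avoiding bag t' starting in the old component stays in it
    have inA_walk : ∀ (u v : V) (w : G.Walk u v), (∀ z ∈ w.support, z ∉ bag t') →
        u ∈ Subtype.val '' c.supp → v ∈ Subtype.val '' c.supp := by
      intro u v w
      induction w with
      | nil => exact fun _ h => h
      | @cons u y v h p ih =>
        intro hs huA
        have hyt' : y ∉ bag t' := by
          refine hs y ?_
          rw [Walk.support_cons]
          exact List.mem_cons_of_mem _ (Walk.start_mem_support p)
        have hyA : y ∈ Subtype.val '' c.supp := by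
          by_cases hyt : y ∈ bag t
          · exact absurd (hbdry y hyt u huA h) hyt'
          · obtain ⟨hu', hcu⟩ := (memA t c u).1 huA
            refine (memA t c y).2 ⟨hyt, ?_⟩
            rw [← hcu]
            have hadjuy : (G.induce (bag t)ᶜ).Adj ⟨u, hu'⟩ ⟨y, hyt⟩ := by simpa using h
            exact ConnectedComponent.sound hadjuy.symm.reachable
        refine ih (fun z hz => hs z ?_) hyA
        rw [Walk.support_cons]
        exact List.mem_cons_of_mem _ hz
    intro x hxA'
    obtain ⟨hx', hcx⟩ := (memA t' c' x).1 hxA'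
    obtain ⟨hw', hcw⟩ := (memA t' c' w₀).1 hw₀A'
    obtain ⟨w⟩ := ConnectedComponent.exact (hcw.trans hcx.symm)
    obtain ⟨wG, hwG⟩ := walk_of_induce w
    exact inA_walk w₀ x wG (fun z hz => hwG z hz) hw₀A
  -- the main double induction
  have main : ∀ (k d : ℕ) (t : ι) (c : (G.induce (bag t)ᶜ).ConnectedComponent),
      S.ncard < 2 * ((Subtype.val '' c.supp) ∩ S).ncard →
      (Subtype.val '' c.supp).ncard = k →
      ∀ v ∈ Subtype.val '' c.supp, ∀ j, v ∈ bag j → T.dist t j = d → False := by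
    intro k
    induction k using Nat.strong_induction_on with
    | _ k IHk =>
    intro d
    induction d using Nat.strong_induction_on with
    | _ d IHd =>
    intro t c hheavy hk v hvA j hj hd
    obtain ⟨t', c', hadj, hsub, hheavy', hP⟩ := step t c hheavy
    by_cases hlt : (Subtype.val '' c'.supp).ncard < k
    · obtain ⟨v', hv'A, _⟩ := heavy_nonempty t' c' hheavy'
      obtain ⟨j', hj'⟩ := hcover v'
      exact IHk _ hlt (T.dist t' j') t' c' hheavy' rfl v' hv'A j' hj' rfl
    · have hle : (Subtype.val '' c'.supp).ncard ≤ k :=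
        hk ▸ Set.ncard_le_ncard hsub (Set.toFinite _)
      have hk' : (Subtype.val '' c'.supp).ncard = k := le_antisymm hle (not_lt.1 hlt)
      have hAeq : Subtype.val '' c'.supp = Subtype.val '' c.supp :=
        Set.eq_of_subset_of_ncard_le hsub (by omega) (Set.toFinite _)
      have hAv : Avoids T t t' j := hP v hvA j hj
      have hdlt : T.dist t' j < T.dist t j := dist_lt t t' j hadj hAv
      exact IHd (T.dist t' j) (hd ▸ hdlt) t' c' hheavy' hk' v (hAeq ▸ hvA) j hj rfl
  obtain ⟨t₀⟩ : Nonempty ι := htree.isConnected.nonempty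
  obtain ⟨c₀, hheavy₀⟩ := hbad t₀
  obtain ⟨v₀, hv₀A, _⟩ := heavy_nonempty t₀ c₀ hheavy₀
  obtain ⟨j₀, hj₀⟩ := hcover v₀
  exact main _ _ t₀ c₀ hheavy₀ rfl v₀ hv₀A j₀ hj₀ rfl
end

section
/- Let G be a finite graph and k ∈ ℕ, and let G_I be the improved graph of G with respect to k. Then tw(G) ≤ k if and only if tw(G_I) ≤ k. -/
open SimpleGraph

/-- The improved graph of `G` with respect to `k`: add an edge between each pair of
distinct vertices having at least `k + 1` common neighbors of degree at most `k` in `G`. -/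
def improvedGraph {V : Type} [Fintype V] (G : SimpleGraph V) [DecidableRel G.Adj] (k : ℕ) :
    SimpleGraph V where
  Adj u v := u ≠ v ∧ (G.Adj u v ∨
    k + 1 ≤ ({w | G.Adj u w ∧ G.Adj v w ∧ G.degree w ≤ k} : Set V).ncard)
  symm := ⟨by
    intro u v h
    obtain ⟨hne, h⟩ := h
    refine ⟨hne.symm, ?_⟩
    rcases h with h | h
    · exact Or.inl h.symm
    · right
      have hset : ({w | G.Adj v w ∧ G.Adj u w ∧ G.degree w ≤ k} : Set V)
          = {w | G.Adj u w ∧ G.Adj v w ∧ G.degree w ≤ k} := by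
        ext w
        constructor <;> rintro ⟨h1, h2, h3⟩ <;> exact ⟨h2, h1, h3⟩
      rw [hset]
      exact h⟩
  loopless := ⟨fun u h => h.1 rfl⟩

namespace TWAux

variable {ι : Type} {T : SimpleGraph ι}

lemma reach_or' {i' i : ι} :
    ∀ {x y : ι} (_ : T.Walk x y),
      ((T.deleteEdges {s(i', i)}).Reachable y i' ∨ (T.deleteEdges {s(i', i)}).Reachable y i) →
      ((T.deleteEdges {s(i', i)}).Reachable x i' ∨ (T.deleteEdges {s(i', i)}).Reachable x i) := by
  intro x y p
  induction p with
  | nil => exact id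
  | cons h p ih =>
    rename_i a c _
    intro hy
    by_cases he : s(a, c) = s(i', i)
    · rw [Sym2.eq_iff] at he
      rcases he with ⟨rfl, rfl⟩ | ⟨rfl, rfl⟩
      · exact Or.inl (Reachable.refl _)
      · exact Or.inr (Reachable.refl _)
    · have hadj : (T.deleteEdges {s(i', i)}).Adj a c :=
        SimpleGraph.deleteEdges_adj.mpr ⟨h, by simpa using he⟩
      rcases ih hy with h1 | h1
      · exact Or.inl (hadj.reachable.trans h1)
      · exact Or.inr (hadj.reachable.trans h1)

lemma reach_or {i' i : ι} {x : ι} (p : T.Walk x i') :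
    (T.deleteEdges {s(i', i)}).Reachable x i' ∨ (T.deleteEdges {s(i', i)}).Reachable x i :=
  reach_or' p (Or.inl (Reachable.refl _))

lemma cross {i' i : ι} (hconn : T.Connected)
    (hbr : ¬ (T.deleteEdges {s(i', i)}).Reachable i' i) :
    ∀ {x y : ι} (q : T.Walk x y),
      (T.deleteEdges {s(i', i)}).Reachable x i' →
      (T.deleteEdges {s(i', i)}).Reachable y i →
      i' ∈ q.support := by
  intro x y q
  induction q with
  | nil =>
    intro hx hy
    exact absurd (hx.symm.trans hy) hbr
  | cons h q ih =>
    rename_i a c _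
    intro hx hy
    obtain ⟨pz⟩ := hconn c i'
    rcases reach_or (i := i) pz with hz | hz
    · simp [Walk.support_cons, ih hz hy]
    · by_cases he : s(a, c) = s(i', i)
      · rw [Sym2.eq_iff] at he
        rcases he with ⟨rfl, rfl⟩ | ⟨rfl, rfl⟩
        · simp
        · exact absurd hx.symm hbr
      · have hadj : (T.deleteEdges {s(i', i)}).Adj a c :=
          SimpleGraph.deleteEdges_adj.mpr ⟨h, by simpa using he⟩
        exact absurd (hadj.symm.reachable.trans hx) (fun hh => hbr (hh.symm.trans hz))

lemma find_dart {S : Set ι} :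
    ∀ {a b : ι} (p : T.Walk a b), p.IsPath → a ∈ S → b ∉ S →
    ∃ i' i, T.Adj i' i ∧ i' ∈ S ∧ i ∉ S ∧ (T.deleteEdges {s(i', i)}).Reachable i b := by
  intro a b p
  induction p with
  | nil => intro _ ha hb; exact absurd ha hb
  | cons h p ih =>
    rename_i a c _
    intro hp ha hb
    rw [Walk.cons_isPath_iff] at hp
    by_cases hc : c ∈ S
    · exact ih hp.1 hc hb
    · refine ⟨a, c, h, ha, hc, ?_⟩
      have hne : ∀ e ∈ p.edges, e ∉ ({s(a, c)} : Set (Sym2 ι)) := by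
        intro e hee hmem
        rw [Set.mem_singleton_iff] at hmem
        subst hmem
        exact hp.2 (p.fst_mem_support_of_mem_edges hee)
      exact (p.toDeleteEdges {s(a, c)} hne).reachable

lemma walk_in_induce {S : Set ι} (h : (T.induce S).Connected) {x y : ι}
    (hx : x ∈ S) (hy : y ∈ S) : ∃ p : T.Walk x y, ∀ z ∈ p.support, z ∈ S := by
  obtain ⟨q⟩ := h ⟨x, hx⟩ ⟨y, hy⟩
  refine ⟨q.map (SimpleGraph.Embedding.induce S).toHom, ?_⟩
  intro z hz
  have hz2 : z ∈ (q.map (SimpleGraph.Embedding.induce S).toHom).support := hz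
  rw [Walk.support_map, List.mem_map] at hz2
  obtain ⟨⟨z', hz'⟩, _, rfl⟩ := hz2
  exact hz'

lemma key {V ι : Type} [Fintype V] {G : SimpleGraph V} [DecidableRel G.Adj] {T : SimpleGraph ι} {bag : ι → Set V}
    {k : ℕ} (hd : IsTreeDecomp G T bag) (hw : ∀ i, (bag i).ncard ≤ k + 1)
    {u v : V} (_huv : u ≠ v)
    (hW : k + 1 ≤ ({w | G.Adj u w ∧ G.Adj v w ∧ G.degree w ≤ k} : Set V).ncard) :
    ∃ i, u ∈ bag i ∧ v ∈ bag i := by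
  classical
  obtain ⟨htree, hcover, hedge, hind⟩ := hd
  by_contra hno
  push_neg at hno
  set W : Set V := {w | G.Adj u w ∧ G.Adj v w ∧ G.degree w ≤ k} with hWdef
  obtain ⟨a, ha⟩ := hcover u
  obtain ⟨b, hb⟩ := hcover v
  have hconn : T.Connected := htree.isConnected
  have hub : u ∉ bag b := fun h => hno b h hb
  -- path from a to b
  obtain ⟨p0⟩ := hconn a b
  obtain ⟨i', i, hadj, hui', hui, hib⟩ := find_dart (S := {j | u ∈ bag j}) p0.toPath.1 p0.toPath.2 ha hub
  -- bridge
  have hbr : ¬ (T.deleteEdges {s(i', i)}).Reachable i' i := by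
    have hac := htree.IsAcyclic
    rw [SimpleGraph.isAcyclic_iff_forall_adj_isBridge] at hac
    exact hac hadj
  have hvi' : v ∉ bag i' := fun h => hno i' hui' h
  -- every w in W is in bag i'
  have hWsub : W ⊆ bag i' := by
    intro w hw'
    obtain ⟨hwu, hwv, _⟩ := hw'
    obtain ⟨x, hxu, hxw⟩ := hedge u w hwu
    obtain ⟨y, hyv, hyw⟩ := hedge v w hwv
    -- x reaches i' in T'
    obtain ⟨px, hpx⟩ := walk_in_induce (hind u) (show x ∈ {j | u ∈ bag j} from hxu) hui'
    have hxe : ∀ e ∈ px.edges, e ∉ ({s(i', i)} : Set (Sym2 ι)) := by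
      intro e hee hmem
      rw [Set.mem_singleton_iff] at hmem
      subst hmem
      exact hui (hpx i (px.snd_mem_support_of_mem_edges hee))
    have hxA : (T.deleteEdges {s(i', i)}).Reachable x i' :=
      (px.toDeleteEdges _ hxe).reachable
    -- y reaches i in T'
    obtain ⟨py, hpy⟩ := walk_in_induce (hind v) (show y ∈ {j | v ∈ bag j} from hyv) hb
    have hye : ∀ e ∈ py.edges, e ∉ ({s(i', i)} : Set (Sym2 ι)) := by
      intro e hee hmem
      rw [Set.mem_singleton_iff] at hmem
      subst hmem
      exact hvi' (hpy i' (py.fst_mem_support_of_mem_edges hee))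
    have hyB : (T.deleteEdges {s(i', i)}).Reachable y i :=
      (py.toDeleteEdges _ hye).reachable.trans hib.symm
    -- walk from x to y inside T_w
    obtain ⟨q, hq⟩ := walk_in_induce (hind w) (show x ∈ {j | w ∈ bag j} from hxw)
      (show y ∈ {j | w ∈ bag j} from hyw)
    exact hq i' (cross hconn hbr q hxA hyB)
  -- cardinality contradiction
  have huW : u ∉ W := fun h => (G.loopless.irrefl u) h.1
  have hWfin : W.Finite := Set.toFinite _
  have h1 : (insert u W).ncard = W.ncard + 1 := Set.ncard_insert_of_notMem huW hWfin
  have h2 : (insert u W) ⊆ bag i' := Set.insert_subset hui' hWsub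
  have h3 : (insert u W).ncard ≤ (bag i').ncard :=
    Set.ncard_le_ncard h2 (Set.toFinite _)
  have h4 := hw i'
  have h5 : k + 1 ≤ W.ncard := hW
  omega

end TWAux

theorem statement4 {V : Type} [Fintype V] (G : SimpleGraph V) [DecidableRel G.Adj] (k : ℕ) :
    TreewidthAtMost G k ↔ TreewidthAtMost (improvedGraph G k) k := by
  constructor
  · rintro ⟨ι, T, bag, ⟨htree, hcover, hedge, hind⟩, hw⟩
    refine ⟨ι, T, bag, ⟨htree, hcover, ?_, hind⟩, hw⟩
    rintro u v ⟨hne, hG | hcard⟩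
    · exact hedge u v hG
    · exact TWAux.key ⟨htree, hcover, hedge, hind⟩ hw hne hcard
  · rintro ⟨ι, T, bag, ⟨htree, hcover, hedge, hind⟩, hw⟩
    refine ⟨ι, T, bag, ⟨htree, hcover, ?_, hind⟩, hw⟩
    intro u v hG
    exact hedge u v ⟨hG.ne, Or.inl hG⟩
end

section
/- Let G be a finite graph and S ⊆ V(G). A set X ⊆ V(G) is a balanced S-separator of G if and only if there exists a partition (M_1, M_2, M_3) of V(G) ∖ X such that no edge of G joins a vertex of M_i to a vertex of M_j for i ≠ j, and |M_i ∩ S| ≤ |S|/2 for each i = 1, 2, 3. -/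
open SimpleGraph

lemma split3 {α : Type} [DecidableEq α] (s : Finset α) (w : α → ℕ) (T : ℕ)
    (hw : ∀ a ∈ s, 2 * w a ≤ T) (hs : ∑ a ∈ s, w a ≤ T) :
    ∃ s1 s2 s3 : Finset α, s1 ∪ s2 ∪ s3 = s ∧ Disjoint s1 s2 ∧ Disjoint s1 s3 ∧
      Disjoint s2 s3 ∧ 2 * ∑ a ∈ s1, w a ≤ T ∧ 2 * ∑ a ∈ s2, w a ≤ T ∧
      2 * ∑ a ∈ s3, w a ≤ T := by
  by_cases h : 2 * ∑ a ∈ s, w a ≤ T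
  · exact ⟨s, ∅, ∅, by simp, by simp, by simp, by simp, h, by simp, by simp⟩
  push_neg at h
  have hP : ∃ n, ∃ u : Finset α, u ⊆ s ∧ u.card = n ∧ T < 2 * ∑ a ∈ u, w a :=
    ⟨s.card, s, Finset.Subset.refl s, rfl, h⟩
  obtain ⟨u, hus, hcard, hu⟩ := Nat.find_spec hP
  have hune : u.Nonempty := by
    rcases Finset.eq_empty_or_nonempty u with h0 | h0
    · simp [h0] at hu
    · exact h0
  obtain ⟨a, ha⟩ := hune
  have hn0 : 0 < Nat.find hP := by
    rw [← hcard]; exact Finset.card_pos.mpr ⟨a, ha⟩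
  have hs1 : 2 * ∑ x ∈ u.erase a, w x ≤ T := by
    by_contra hcon
    push_neg at hcon
    exact Nat.find_min hP (m := (u.erase a).card)
      (by rw [Finset.card_erase_of_mem ha, hcard]; omega)
      ⟨u.erase a, (Finset.erase_subset a u).trans hus, rfl, hcon⟩
  refine ⟨u.erase a, {a}, s \ u, ?_, ?_, ?_, ?_, hs1, ?_, ?_⟩
  · rw [Finset.union_comm (u.erase a) {a}, ← Finset.insert_eq, Finset.insert_erase ha,
      Finset.union_sdiff_of_subset hus]
  · exact Finset.disjoint_singleton_right.mpr (Finset.notMem_erase a u)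
  · exact Finset.disjoint_of_subset_left (Finset.erase_subset a u) Finset.disjoint_sdiff
  · exact Finset.disjoint_of_subset_left (Finset.singleton_subset_iff.mpr ha)
      Finset.disjoint_sdiff
  · simpa using hw a (hus ha)
  · have h1 : ∑ x ∈ s \ u, w x + ∑ x ∈ u, w x = ∑ x ∈ s, w x := Finset.sum_sdiff hus
    omega

lemma ncard_biUnion {α ι : Type} [Finite α] (t : Finset ι) (f : ι → Set α)
    (h : ∀ i ∈ t, ∀ j ∈ t, i ≠ j → Disjoint (f i) (f j)) :
    (⋃ i ∈ t, f i).ncard = ∑ i ∈ t, (f i).ncard := by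
  classical
  induction t using Finset.induction_on with
  | empty => simp
  | @insert a t ha ih =>
    rw [Finset.set_biUnion_insert, Finset.sum_insert ha,
      Set.ncard_union_eq ?_ (Set.toFinite _) (Set.toFinite _),
      ih (fun i hi j hj hij => h i (Finset.mem_insert_of_mem hi) j
        (Finset.mem_insert_of_mem hj) hij)]
    rw [Set.disjoint_iUnion₂_right]
    intro i hi
    exact h a (Finset.mem_insert_self a t) i (Finset.mem_insert_of_mem hi)
      (fun he => ha (he ▸ hi))

lemma walk_closed {W : Type} {H : SimpleGraph W} {P : W → Prop}
    (hP : ∀ a b, H.Adj a b → P a → P b) {a b : W} (h : H.Reachable a b) : P a → P b := by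
  obtain ⟨p⟩ := h
  induction p with
  | nil => exact id
  | cons hadj p ih => exact fun ha => ih (hP _ _ hadj ha)

theorem statement5 {V : Type} [Fintype V] (G : SimpleGraph V) (S X : Set V) :
    BalancedSSep G S X ↔
      ∃ M1 M2 M3 : Set V,
        M1 ∪ M2 ∪ M3 = Xᶜ ∧
        Disjoint M1 M2 ∧ Disjoint M1 M3 ∧ Disjoint M2 M3 ∧
        (∀ u ∈ M1, ∀ v ∈ M2, ¬ G.Adj u v) ∧
        (∀ u ∈ M1, ∀ v ∈ M3, ¬ G.Adj u v) ∧
        (∀ u ∈ M2, ∀ v ∈ M3, ¬ G.Adj u v) ∧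
        2 * (M1 ∩ S).ncard ≤ S.ncard ∧
        2 * (M2 ∩ S).ncard ≤ S.ncard ∧
        2 * (M3 ∩ S).ncard ≤ S.ncard := by
  classical
  set G' := G.induce Xᶜ with hG'
  haveI : Fintype G'.ConnectedComponent := Fintype.ofFinite _
  set f : G'.ConnectedComponent → Set V := fun c => Subtype.val '' c.supp with hf
  -- basic facts
  have hadjVal : ∀ a b : ↥(Xᶜ), G'.Adj a b → G.Adj a.val b.val := fun a b hab => hab
  have hdisj : ∀ c d : G'.ConnectedComponent, c ≠ d → Disjoint (f c) (f d) := by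
    intro c d hcd
    rw [Set.disjoint_left]
    rintro x ⟨u, hu, rfl⟩ ⟨v, hv, hv2⟩
    have : v = u := Subtype.ext hv2
    subst this
    rw [ConnectedComponent.mem_supp_iff] at hu hv
    exact hcd (hu ▸ hv ▸ rfl)
  have hunion : ⋃ c, f c = Xᶜ := by
    ext x
    constructor
    · rintro ⟨s, ⟨c, rfl⟩, u, _, rfl⟩
      exact u.2
    · intro hx
      exact ⟨f (G'.connectedComponentMk ⟨x, hx⟩), ⟨_, rfl⟩, ⟨x, hx⟩, rfl, rfl⟩
  have hnoadj : ∀ c d : G'.ConnectedComponent, c ≠ d →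
      ∀ u ∈ f c, ∀ v ∈ f d, ¬ G.Adj u v := by
    rintro c d hcd u ⟨a, ha, rfl⟩ v ⟨b, hb, rfl⟩ hadj
    have : G'.Adj a b := hadj
    rw [ConnectedComponent.mem_supp_iff] at ha hb
    exact hcd (ha ▸ hb ▸ (ConnectedComponent.connectedComponentMk_eq_of_adj this))
  constructor
  · intro hbal
    obtain ⟨s1, s2, s3, huni, h12, h13, h23, hb1, hb2, hb3⟩ :=
      split3 (Finset.univ : Finset G'.ConnectedComponent)
        (fun c => ((f c) ∩ S).ncard) S.ncard
        (fun c _ => hbal c)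
        (by
          rw [← ncard_biUnion Finset.univ (fun c => f c ∩ S)
            (fun i _ j _ hij => Set.disjoint_of_subset Set.inter_subset_left
              Set.inter_subset_left (hdisj i j hij))]
          apply Set.ncard_le_ncard _ (Set.toFinite _)
          intro x hx
          simp only [Set.mem_iUnion] at hx
          obtain ⟨c, _, _, hxS⟩ := hx
          exact hxS)
    refine ⟨⋃ c ∈ s1, f c, ⋃ c ∈ s2, f c, ⋃ c ∈ s3, f c, ?_, ?_, ?_, ?_, ?_, ?_, ?_, ?_, ?_, ?_⟩
    · rw [← Finset.set_biUnion_union, ← Finset.set_biUnion_union, huni,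
        show (⋃ x ∈ (Finset.univ : Finset G'.ConnectedComponent), f x) = ⋃ x, f x from by simp,
        hunion]
    · rw [Set.disjoint_iUnion₂_left]
      intro c hc
      rw [Set.disjoint_iUnion₂_right]
      intro d hd
      exact hdisj c d (fun he => Finset.disjoint_left.mp h12 hc (he ▸ hd))
    · rw [Set.disjoint_iUnion₂_left]
      intro c hc
      rw [Set.disjoint_iUnion₂_right]
      intro d hd
      exact hdisj c d (fun he => Finset.disjoint_left.mp h13 hc (he ▸ hd))
    · rw [Set.disjoint_iUnion₂_left]
      intro c hc
      rw [Set.disjoint_iUnion₂_right]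
      intro d hd
      exact hdisj c d (fun he => Finset.disjoint_left.mp h23 hc (he ▸ hd))
    · rintro u hu v hv
      simp only [Set.mem_iUnion] at hu hv
      obtain ⟨c, hc, hcu⟩ := hu
      obtain ⟨d, hd, hdv⟩ := hv
      exact hnoadj c d (fun he => Finset.disjoint_left.mp h12 hc (he ▸ hd)) u hcu v hdv
    · rintro u hu v hv
      simp only [Set.mem_iUnion] at hu hv
      obtain ⟨c, hc, hcu⟩ := hu
      obtain ⟨d, hd, hdv⟩ := hv
      exact hnoadj c d (fun he => Finset.disjoint_left.mp h13 hc (he ▸ hd)) u hcu v hdv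
    · rintro u hu v hv
      simp only [Set.mem_iUnion] at hu hv
      obtain ⟨c, hc, hcu⟩ := hu
      obtain ⟨d, hd, hdv⟩ := hv
      exact hnoadj c d (fun he => Finset.disjoint_left.mp h23 hc (he ▸ hd)) u hcu v hdv
    all_goals {
      first
      | (refine le_trans ?_ hb1; apply Nat.mul_le_mul_left
         ; rw [← ncard_biUnion s1 (fun c => f c ∩ S)
              (fun i _ j _ hij => Set.disjoint_of_subset Set.inter_subset_left
                Set.inter_subset_left (hdisj i j hij))]
         ; apply le_of_eq; congr 1; ext x; simp [Set.mem_iUnion]; tauto)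
      | (refine le_trans ?_ hb2; apply Nat.mul_le_mul_left
         ; rw [← ncard_biUnion s2 (fun c => f c ∩ S)
              (fun i _ j _ hij => Set.disjoint_of_subset Set.inter_subset_left
                Set.inter_subset_left (hdisj i j hij))]
         ; apply le_of_eq; congr 1; ext x; simp [Set.mem_iUnion]; tauto)
      | (refine le_trans ?_ hb3; apply Nat.mul_le_mul_left
         ; rw [← ncard_biUnion s3 (fun c => f c ∩ S)
              (fun i _ j _ hij => Set.disjoint_of_subset Set.inter_subset_left
                Set.inter_subset_left (hdisj i j hij))]
         ; apply le_of_eq; congr 1; ext x; simp [Set.mem_iUnion]; tauto) }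
  · rintro ⟨M1, M2, M3, huni, h12, h13, h23, e12, e13, e23, b1, b2, b3⟩ c
    obtain ⟨v, rfl⟩ := c.exists_rep
    have hv : v.val ∈ M1 ∪ M2 ∪ M3 := by rw [huni]; exact v.2
    have key : ∀ M : Set V, (∀ a b : ↥(Xᶜ), G'.Adj a b → a.val ∈ M → b.val ∈ M) →
        2 * (M ∩ S).ncard ≤ S.ncard → v.val ∈ M →
        2 * ((Subtype.val '' (G'.connectedComponentMk v).supp) ∩ S).ncard ≤ S.ncard := by
      intro M hstep hM hvM
      refine le_trans (Nat.mul_le_mul_left 2 (Set.ncard_le_ncard ?_ (Set.toFinite _))) hM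
      rintro x ⟨⟨u, hu, rfl⟩, hxS⟩
      refine ⟨?_, hxS⟩
      rw [ConnectedComponent.mem_supp_iff] at hu
      have hreach : G'.Reachable v u := ConnectedComponent.exact hu.symm
      exact walk_closed hstep hreach hvM
    have hmem : ∀ a : ↥(Xᶜ), a.val ∈ M1 ∪ M2 ∪ M3 := fun a => by rw [huni]; exact a.2
    rcases hv with (hv1 | hv2) | hv3
    · refine key M1 ?_ b1 hv1
      intro a b hab haM
      rcases hmem b with (h | h) | h
      · exact h
      · exact absurd (hadjVal a b hab) (e12 a.val haM b.val h)
      · exact absurd (hadjVal a b hab) (e13 a.val haM b.val h)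
    · refine key M2 ?_ b2 hv2
      intro a b hab haM
      rcases hmem b with (h | h) | h
      · exact absurd (hadjVal a b hab).symm (e12 b.val h a.val haM)
      · exact h
      · exact absurd (hadjVal a b hab) (e23 a.val haM b.val h)
    · refine key M3 ?_ b3 hv3
      intro a b hab haM
      rcases hmem b with (h | h) | h
      · exact absurd (hadjVal a b hab).symm (e13 b.val h a.val haM)
      · exact absurd (hadjVal a b hab).symm (e23 b.val h a.val haM)
      · exact h
end

section
/- Let T be a finite rooted tree with root r and let μ : V(T) → ℝ be a function satisfying: (i) μ(v) ≥ 1 for every v ∈ V(T); (ii) for every vertex v with children v_1, …, v_p, Σ_{i=1}^p μ(v_i) ≤ μ(v); and (iii) there exists a constant 0 < C < 1 such that whenever v is the parent of v', μ(v') ≤ C·μ(v). Then |V(T)| ≤ (1 + 1/(1−C))·μ(r) − 1. -/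
open SimpleGraph Finset

private lemma parent_exists {T : Type} (tree : SimpleGraph T) (hconn : tree.Connected)
    (r u : T) (hu : u ≠ r) : ∃ v, tree.Adj u v ∧ tree.dist r u = tree.dist r v + 1 := by
  obtain ⟨p, hp, hlen⟩ := hconn.exists_path_of_dist r u
  have hd : 0 < tree.dist r u := hconn.pos_dist_of_ne (Ne.symm hu)
  cases hq : p.reverse with
  | nil => exact absurd rfl hu
  | @cons _ v _ h q' =>
      refine ⟨v, h, ?_⟩
      have hlq : q'.length + 1 = tree.dist r u := by
        have h0 : p.reverse.length = tree.dist r u := by rw [Walk.length_reverse, hlen]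
        rw [hq] at h0
        simpa using h0
      have hb : tree.dist r v ≤ q'.length := by
        have := SimpleGraph.dist_le q'.reverse
        simpa using this
      have ht : tree.dist r u ≤ tree.dist r v + tree.dist v u := hconn.dist_triangle
      have hvu : tree.dist v u = 1 := by
        rw [SimpleGraph.dist_eq_one_iff_adj]; exact h.symm
      omega

private lemma parent_unique {T : Type} (tree : SimpleGraph T) (htree : tree.IsTree)
    (r u v w : T) (hv : tree.Adj u v) (hdv : tree.dist r u = tree.dist r v + 1)
    (hw : tree.Adj u w) (hdw : tree.dist r u = tree.dist r w + 1) : v = w := by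
  obtain ⟨p, hp, hlp⟩ := htree.isConnected.exists_path_of_dist r v
  obtain ⟨q, hq, hlq⟩ := htree.isConnected.exists_path_of_dist r w
  have hP : (p.concat hv.symm).IsPath :=
    Walk.isPath_of_length_eq_dist _ (by rw [Walk.length_concat, hlp, hdv])
  have hQ : (q.concat hw.symm).IsPath :=
    Walk.isPath_of_length_eq_dist _ (by rw [Walk.length_concat, hlq, hdw])
  have huniq := htree.IsAcyclic.path_unique ⟨p.concat hv.symm, hP⟩ ⟨q.concat hw.symm, hQ⟩
  have heq : p.concat hv.symm = q.concat hw.symm := congrArg Subtype.val huniq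
  exact (Walk.concat_inj heq).1

theorem statement7 {T : Type} [Fintype T] (tree : SimpleGraph T) [DecidableRel tree.Adj]
    (htree : tree.IsTree) (r : T) (μ : T → ℝ) (C : ℝ)
    (h1 : ∀ v, 1 ≤ μ v)
    (h2 : ∀ v : T,
      ∑ u ∈ Finset.univ.filter (fun u => tree.Adj u v ∧ tree.dist r u = tree.dist r v + 1),
        μ u ≤ μ v)
    (hC0 : 0 < C) (hC1 : C < 1)
    (h3 : ∀ u v : T, tree.Adj u v → tree.dist r u = tree.dist r v + 1 → μ u ≤ C * μ v) :
    (Fintype.card T : ℝ) ≤ (1 + 1 / (1 - C)) * μ r - 1 := by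
  classical
  have hC1' : (0:ℝ) < 1 - C := by linarith
  set K : ℝ := 1 / (1 - C) with hK
  have hK1 : 1 ≤ K := by
    rw [hK, le_div_iff₀ hC1']; linarith
  have hKC : K * (1 - C) = 1 := by
    rw [hK]; field_simp
  set child : T → Finset T := fun v =>
    Finset.univ.filter (fun u => tree.Adj u v ∧ tree.dist r u = tree.dist r v + 1) with hchild
  have key : ∀ f : T → ℝ,
      ∑ v, ∑ u ∈ child v, f u = ∑ u ∈ Finset.univ.erase r, f u := by
    intro f
    rw [hchild]
    simp only [Finset.sum_filter]
    rw [Finset.sum_comm]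
    rw [show (Finset.univ.erase r : Finset T)
        = Finset.univ.filter (fun u => u ≠ r) from (Finset.filter_ne' _ _).symm]
    rw [Finset.sum_filter]
    refine Finset.sum_congr rfl fun u _ => ?_
    by_cases hu : u = r
    · subst hu
      rw [if_neg (by simp)]
      refine Finset.sum_eq_zero fun v _ => ?_
      rw [if_neg]
      rintro ⟨-, hd⟩
      rw [SimpleGraph.dist_self] at hd
      omega
    · rw [if_pos hu]
      obtain ⟨v0, hv0a, hv0d⟩ := parent_exists tree htree.isConnected r u hu
      rw [Finset.sum_eq_single v0]
      · rw [if_pos ⟨hv0a, hv0d⟩]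
      · intro b _ hb
        rw [if_neg]
        rintro ⟨hba, hbd⟩
        exact hb (parent_unique tree htree r u b v0 hba hbd hv0a hv0d)
      · intro h; exact absurd (Finset.mem_univ v0) h
  have h2' : ∀ v, ∑ u ∈ child v, μ u ≤ μ v := h2
  have sum_g : ∑ v, (μ v - ∑ u ∈ child v, μ u) = μ r := by
    rw [Finset.sum_sub_distrib, key μ]
    have := Finset.add_sum_erase Finset.univ μ (Finset.mem_univ r)
    linarith
  have hT1 : 1 ≤ Fintype.card T := Fintype.card_pos_iff.mpr htree.isConnected.nonempty
  have sum_c : ∑ v, ((child v).card : ℝ) = (Fintype.card T : ℝ) - 1 := by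
    have h := key (fun _ => (1:ℝ))
    simp only [Finset.sum_const, nsmul_eq_mul, mul_one] at h
    rw [h, Finset.card_erase_of_mem (Finset.mem_univ r), Finset.card_univ,
      Nat.cast_sub hT1]
    simp
  have pointwise : ∀ v, (2:ℝ) - (child v).card ≤ (1 + K) * (μ v - ∑ u ∈ child v, μ u) := by
    intro v
    have hgv : (0:ℝ) ≤ μ v - ∑ u ∈ child v, μ u := by linarith [h2' v]
    match hcard : (child v).card with
    | 0 =>
      have he : child v = ∅ := Finset.card_eq_zero.mp hcard
      rw [he]
      simp only [Finset.sum_empty, Nat.cast_zero]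
      nlinarith [h1 v]
    | 1 =>
      obtain ⟨u, hu⟩ := Finset.card_eq_one.mp hcard
      have humem : u ∈ child v := hu ▸ Finset.mem_singleton_self u
      rw [hchild, Finset.mem_filter] at humem
      have hμu : μ u ≤ C * μ v := h3 u v humem.2.1 humem.2.2
      rw [hu]
      simp only [Finset.sum_singleton, Nat.cast_one]
      nlinarith [h1 v, mul_nonneg (by linarith : (0:ℝ) ≤ 1 + K)
        (by nlinarith [h1 v] : (0:ℝ) ≤ μ v - μ u - (1 - C) * μ v)]
    | (n + 2) =>
      have hn : (0:ℝ) ≤ (n:ℝ) := Nat.cast_nonneg n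
      push_cast
      nlinarith
  have main : ∑ v, ((2:ℝ) - (child v).card) ≤ (1 + K) * μ r := by
    calc ∑ v, ((2:ℝ) - (child v).card)
        ≤ ∑ v, (1 + K) * (μ v - ∑ u ∈ child v, μ u) :=
          Finset.sum_le_sum fun v _ => pointwise v
      _ = (1 + K) * μ r := by rw [← Finset.mul_sum, sum_g]
  have expand : ∑ v, ((2:ℝ) - (child v).card)
      = 2 * (Fintype.card T : ℝ) - ((Fintype.card T : ℝ) - 1) := by
    rw [Finset.sum_sub_distrib, sum_c, Finset.sum_const, Finset.card_univ,
      nsmul_eq_mul, mul_comm]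
  rw [expand] at main
  linarith
end

section
/- Let G be a finite graph of treewidth at most k and let (A_1, B, A_2) be a partition of V(G) such that no edge of G joins a vertex of A_1 to a vertex of A_2 and |A_1|, |A_2| ≤ (3/4)|V(G)|. Then there exist a partition (T_L, X_B, T_R) of B and integers k_1, k_2 with k_1 + k_2 + |X_B| ≤ k+1 such that, letting G_1 be the induced subgraph G[A_1 ∪ (B ∖ X_B)] and G_2 be G[A_2 ∪ (B ∖ X_B)], each equipped with terminal sets T_L and T_R, the following hold: (i) G_1 admits a terminal separation of order k_1 and G_2 admits a terminal separation of order k_2; (ii) for every left-pushed terminal separation (L_1, X_1, R_1) of order k_1 in G_1 and every right-pushed terminal separation (L_2, X_2, R_2) of order k_2 in G_2, the triple (L_1 ∪ T_L ∪ L_2, X_1 ∪ X_B ∪ X_2, R_1 ∪ T_R ∪ R_2) is a partition of V(G) with T_L contained in the first part, T_R contained in the third part, no edge of G between the first and third parts, the middle part of size at most k+1, and both |L_1 ∪ T_L ∪ L_2| and |R_1 ∪ T_R ∪ R_2| at most (7/8)|V(G)| + (|B| + k + 1)/2. -/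
open SimpleGraph

/-- `(L, X, R)` is a terminal separation of order `ℓ` of the induced subgraph `G[W]`
with terminal sets `TL` and `TR`. -/
def IsTermSep {V : Type} (G : SimpleGraph V) (W TL TR : Set V) (ℓ : ℕ)
    (L X R : Set V) : Prop :=
  L ∪ X ∪ R = W ∧ Disjoint L X ∧ Disjoint L R ∧ Disjoint X R ∧
  TL ⊆ L ∧ TR ⊆ R ∧ (∀ u ∈ L, ∀ v ∈ R, ¬ G.Adj u v) ∧ X.ncard ≤ ℓ

/-- A terminal separation of order `ℓ` maximizing the size of the left side. -/
def IsLeftPushed {V : Type} (G : SimpleGraph V) (W TL TR : Set V) (ℓ : ℕ)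
    (L X R : Set V) : Prop :=
  IsTermSep G W TL TR ℓ L X R ∧
  ∀ L' X' R', IsTermSep G W TL TR ℓ L' X' R' → L'.ncard ≤ L.ncard

/-- A terminal separation of order `ℓ` maximizing the size of the right side. -/
def IsRightPushed {V : Type} (G : SimpleGraph V) (W TL TR : Set V) (ℓ : ℕ)
    (L X R : Set V) : Prop :=
  IsTermSep G W TL TR ℓ L X R ∧
  ∀ L' X' R', IsTermSep G W TL TR ℓ L' X' R' → R'.ncard ≤ R.ncard

section TreeSide
variable {ι : Type} {T : SimpleGraph ι}

/-- If `y` lies on a shortest walk from `x` to `z`, then distances add up. -/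
lemma aux_dist_add_of_mem_support {x z y : ι} (q : T.Walk x z)
    (hq : q.length = T.dist x z) (hy : y ∈ q.support) :
    T.dist x y + T.dist y z ≤ T.dist x z := by
  classical
  have hspec := q.take_spec hy
  have hlen : (q.takeUntil y hy).length + (q.dropUntil y hy).length = q.length := by
    conv_rhs => rw [← hspec]
    rw [SimpleGraph.Walk.length_append]
  calc T.dist x y + T.dist y z ≤ (q.takeUntil y hy).length + (q.dropUntil y hy).length :=
        Nat.add_le_add (SimpleGraph.dist_le _) (SimpleGraph.dist_le _)
    _ = q.length := hlen
    _ = T.dist x z := hq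

lemma aux_dist_ne (hT : T.IsTree) {i j : ι} (hij : T.Adj i j) (x : ι) :
    T.dist x i ≠ T.dist x j := by
  intro hEq
  obtain ⟨p, hp, hpl⟩ := hT.isConnected.exists_path_of_dist x i
  obtain ⟨q, hq, hql⟩ := hT.isConnected.exists_path_of_dist x j
  have hij1 : T.dist i j = 1 := (SimpleGraph.dist_eq_one_iff_adj).2 hij
  have hiq : i ∉ q.support := by
    intro hmem
    have := aux_dist_add_of_mem_support q hql hmem
    rw [hij1] at this
    omega
  have hr : (SimpleGraph.Walk.cons hij q.reverse).IsPath := by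
    refine (hq.reverse).cons ?_
    rwa [SimpleGraph.Walk.support_reverse, List.mem_reverse]
  have huniq := hT.IsAcyclic.path_unique ⟨p.reverse, hp.reverse⟩ ⟨SimpleGraph.Walk.cons hij q.reverse, hr⟩
  have hlen : p.reverse.length = (SimpleGraph.Walk.cons hij q.reverse).length := by
    rw [congrArg (fun r : T.Path i x => r.1.length) huniq]
  rw [SimpleGraph.Walk.length_reverse, SimpleGraph.Walk.length_cons,
    SimpleGraph.Walk.length_reverse] at hlen
  omega

lemma aux_dist_cases (hT : T.IsTree) {i j : ι} (hij : T.Adj i j) (x : ι) :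
    T.dist x j = T.dist x i + 1 ∨ T.dist x i = T.dist x j + 1 := by
  have h1 : T.dist x j ≤ T.dist x i + 1 := by
    have := hT.isConnected.dist_triangle (u := x) (v := i) (w := j)
    rwa [(SimpleGraph.dist_eq_one_iff_adj).2 hij] at this
  have h2 : T.dist x i ≤ T.dist x j + 1 := by
    have := hT.isConnected.dist_triangle (u := x) (v := j) (w := i)
    rwa [(SimpleGraph.dist_eq_one_iff_adj).2 hij.symm] at this
  have := aux_dist_ne hT hij x
  omega

end TreeSide

section TreeSide2
variable {ι : Type} {T : SimpleGraph ι}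

/-- The set of tree nodes strictly closer to `j` than to `i` (the `j`-side of edge `ij`). -/
def TSide (T : SimpleGraph ι) (i j : ι) : Set ι := {x | T.dist x j < T.dist x i}

lemma aux_side_mem_iff (hT : T.IsTree) {i j : ι} (hij : T.Adj i j) {x : ι} :
    x ∈ TSide T i j ↔ T.dist x i = T.dist x j + 1 := by
  constructor
  · intro hx
    rcases aux_dist_cases hT hij x with h | h
    · exact absurd hx (by simp [TSide]; omega)
    · exact h
  · intro h; simp [TSide]; omega

lemma aux_side_unique (hT : T.IsTree) {i j j' : ι} (hij : T.Adj i j) (hij' : T.Adj i j')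
    {x : ι} (hx : x ∈ TSide T i j) (hx' : x ∈ TSide T i j') : j = j' := by
  by_contra hne
  have h1 : T.dist x i = T.dist x j + 1 := (aux_side_mem_iff hT hij).1 hx
  have h2 : T.dist x i = T.dist x j' + 1 := (aux_side_mem_iff hT hij').1 hx'
  obtain ⟨p, hp, hpl⟩ := hT.isConnected.exists_path_of_dist x j
  obtain ⟨p', hp', hpl'⟩ := hT.isConnected.exists_path_of_dist x j'
  have hip : i ∉ p.support := by
    intro hmem
    have := aux_dist_add_of_mem_support p hpl hmem
    have : T.dist i j = 1 := (SimpleGraph.dist_eq_one_iff_adj).2 hij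
    have := aux_dist_add_of_mem_support p hpl hmem
    omega
  have hip' : i ∉ p'.support := by
    intro hmem
    have h3 : T.dist i j' = 1 := (SimpleGraph.dist_eq_one_iff_adj).2 hij'
    have := aux_dist_add_of_mem_support p' hpl' hmem
    omega
  have hr : (SimpleGraph.Walk.cons hij p.reverse).IsPath := by
    refine (hp.reverse).cons ?_
    rwa [SimpleGraph.Walk.support_reverse, List.mem_reverse]
  have hr' : (SimpleGraph.Walk.cons hij' p'.reverse).IsPath := by
    refine (hp'.reverse).cons ?_
    rwa [SimpleGraph.Walk.support_reverse, List.mem_reverse]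
  have huniq := hT.IsAcyclic.path_unique
    ⟨SimpleGraph.Walk.cons hij p.reverse, hr⟩ ⟨SimpleGraph.Walk.cons hij' p'.reverse, hr'⟩
  have hsupp : j ∈ (SimpleGraph.Walk.cons hij' p'.reverse).support := by
    rw [← congrArg (fun r : T.Path i x => r.1.support) huniq]
    simp [SimpleGraph.Walk.support_cons]
  rw [SimpleGraph.Walk.support_cons] at hsupp
  rcases List.mem_cons.1 hsupp with h | h
  · exact hij.ne h.symm
  · rw [SimpleGraph.Walk.support_reverse, List.mem_reverse] at h
    have hadd := aux_dist_add_of_mem_support p' hpl' h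
    have hjj' : T.dist j j' ≠ 0 := by
      rw [SimpleGraph.dist_ne_zero_iff_ne_and_reachable]
      exact ⟨hne, hT.isConnected j j'⟩
    omega

lemma aux_gate_exists (hT : T.IsTree) {i x : ι} (hxi : x ≠ i) :
    ∃ j, T.Adj i j ∧ x ∈ TSide T i j := by
  obtain ⟨w, hw, hwl⟩ := hT.isConnected.exists_path_of_dist i x
  have hpos : T.dist i x ≠ 0 := by
    rw [SimpleGraph.dist_ne_zero_iff_ne_and_reachable]
    exact ⟨fun h => hxi h.symm, hT.isConnected i x⟩
  cases w with
  | nil => exact absurd rfl hxi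
  | @cons _ j _ h w' =>
    refine ⟨j, h, ?_⟩
    have hlen : w'.length + 1 = T.dist i x := by
      simpa [SimpleGraph.Walk.length_cons] using hwl
    have hxj : T.dist x j ≤ T.dist i x - 1 := by
      have := SimpleGraph.dist_le w'.reverse
      rw [SimpleGraph.Walk.length_reverse] at this
      omega
    have hxi' : T.dist x i = T.dist i x := SimpleGraph.dist_comm ..
    simp only [TSide, Set.mem_setOf_eq]
    omega

lemma aux_side_closed (hT : T.IsTree) {i j a b : ι} (hij : T.Adj i j)
    (ha : a ∈ TSide T i j) (hab : T.Adj a b) (hbi : b ≠ i) : b ∈ TSide T i j := by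
  have hab1 : T.dist b a = 1 := (SimpleGraph.dist_eq_one_iff_adj).2 hab.symm
  rcases aux_dist_cases hT hab i with h | h
  · -- dist i b = dist i a + 1  (b farther from i)
    have hia : T.dist i a = T.dist a i := SimpleGraph.dist_comm ..
    have hib : T.dist i b = T.dist b i := SimpleGraph.dist_comm ..
    have haj : T.dist a j < T.dist a i := ha
    have hbj : T.dist b j ≤ T.dist b a + T.dist a j := hT.isConnected.dist_triangle
    simp only [TSide, Set.mem_setOf_eq]
    omega
  · -- dist i a = dist i b + 1 (b closer); use gate uniqueness
    obtain ⟨j', hij', hbj'⟩ := aux_gate_exists hT hbi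
    have haj' : a ∈ TSide T i j' := by
      have h1 : T.dist b i = T.dist b j' + 1 := (aux_side_mem_iff hT hij').1 hbj'
      have h2 : T.dist a j' ≤ T.dist a b + T.dist b j' := hT.isConnected.dist_triangle
      have h3 : T.dist a b = 1 := (SimpleGraph.dist_eq_one_iff_adj).2 hab
      have hia : T.dist i a = T.dist a i := SimpleGraph.dist_comm ..
      have hib : T.dist i b = T.dist b i := SimpleGraph.dist_comm ..
      simp only [TSide, Set.mem_setOf_eq]
      omega
    rwa [aux_side_unique hT hij hij' ha haj']
  
lemma aux_side_nested (hT : T.IsTree) {i j l : ι} (hij : T.Adj i j) (hjl : T.Adj j l)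
    (hli : l ≠ i) : TSide T j l ⊆ TSide T i j := by
  intro x hx
  rcases aux_dist_cases hT hij x with h | h
  · -- dist x j = dist x i + 1 : x on i-side of edge ij, i.e. x ∈ TSide j i
    have hxi : x ∈ TSide T j i := by simp only [TSide, Set.mem_setOf_eq]; omega
    exact absurd (aux_side_unique hT hjl hij.symm hx hxi) hli
  · simp only [TSide, Set.mem_setOf_eq]; omega

lemma aux_side_disj (hT : T.IsTree) {i j : ι} (hij : T.Adj i j) :
    TSide T i j ∩ TSide T j i = ∅ := by
  ext x
  simp only [TSide, Set.mem_inter_iff, Set.mem_setOf_eq, Set.mem_empty_iff_false, iff_false]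
  omega

end TreeSide2

/-! ### The graph `G` with a set of vertices deleted (kept as isolated vertices) -/

def Gavoid {V : Type} (G : SimpleGraph V) (X : Set V) : SimpleGraph V where
  Adj u v := G.Adj u v ∧ u ∉ X ∧ v ∉ X
  symm := ⟨fun _ _ ⟨h, hu, hv⟩ => ⟨h.symm, hv, hu⟩⟩
  loopless := ⟨fun v h => G.irrefl h.1⟩

section Centroid
variable {V : Type} [Fintype V]

lemma aux_subtree_side {ι : Type} {T : SimpleGraph ι} (hT : T.IsTree) {S : Set ι}
    (hconn : (T.induce S).Connected) {i j : ι} (hij : T.Adj i j) (hiS : i ∉ S)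
    {x0 : ι} (hx0 : x0 ∈ S) (h0 : x0 ∈ TSide T i j) : S ⊆ TSide T i j := by
  intro x hx
  suffices h : ∀ (a b : ↥S) (_ : (T.induce S).Walk a b),
      (a : ι) ∈ TSide T i j → (b : ι) ∈ TSide T i j by
    obtain ⟨w⟩ := hconn.preconnected ⟨x0, hx0⟩ ⟨x, hx⟩
    exact h _ _ w h0
  intro a b w
  induction w with
  | nil => exact id
  | @cons a c b hadj q ih =>
    intro ha
    apply ih
    have hac : T.Adj (a : ι) (c : ι) := hadj
    exact aux_side_closed hT hij ha hac (fun hc => hiS (hc ▸ c.2))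

/-- Centroid bag: a set `X` of size at most `k+1` such that all components of
`G - X` have at most half the vertices. -/
lemma exists_centroid_bag (G : SimpleGraph V) (k : ℕ) (htw : TreewidthAtMost G k) :
    ∃ X : Set V, X.ncard ≤ k + 1 ∧
      ∀ v, v ∉ X → 2 * {w | (Gavoid G X).Reachable v w}.ncard ≤ Fintype.card V := by
  classical
  obtain ⟨ι, T, bag, ⟨htree, hcov, hedges, hconn⟩, hsize⟩ := htw
  by_contra hbad
  push_neg at hbad
  set n := Fintype.card V with hn
  let S : ι → ι → Set V := fun i j => {v | {x | v ∈ bag x} ⊆ TSide T i j}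
  have key : ∀ i, ∃ j, T.Adj i j ∧ n < 2 * (S i j).ncard := by
    intro i
    obtain ⟨v, hv, hbig⟩ := hbad (bag i) (hsize i)
    obtain ⟨x0, hx0⟩ := hcov v
    have hx0i : x0 ≠ i := fun h => hv (h ▸ hx0)
    obtain ⟨j, hij, hside⟩ := aux_gate_exists htree hx0i
    refine ⟨j, hij, lt_of_lt_of_le hbig ?_⟩
    have hv0 : {x | v ∈ bag x} ⊆ TSide T i j :=
      aux_subtree_side htree (hconn v) hij (fun hc => hv hc) hx0 hside
    have hsub : {w | (Gavoid G (bag i)).Reachable v w} ⊆ S i j := by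
      intro w hw
      obtain ⟨p⟩ := hw
      suffices h : ∀ (a b : V) (_ : (Gavoid G (bag i)).Walk a b),
          a ∈ S i j → b ∈ S i j from h v w p hv0
      intro a b p
      induction p with
      | nil => exact id
      | @cons a m b hadj q ih =>
        intro ha
        apply ih
        obtain ⟨x1, hx1a, hx1m⟩ := hedges _ _ hadj.1
        exact aux_subtree_side htree (hconn m) hij (fun hc => hadj.2.2 hc) hx1m (ha hx1a)
    exact Nat.mul_le_mul_left 2 (Set.ncard_le_ncard hsub (Set.toFinite _))
  -- now derive a contradiction by an infinite descent along the tree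
  have hneι : Nonempty ι := htree.isConnected.nonempty
  choose f hadjf hbigf using key
  obtain ⟨i0⟩ := hneι
  let a : ℕ → ι := fun t => f^[t] i0
  have ha_succ : ∀ t, a (t + 1) = f (a t) := fun t => Function.iterate_succ_apply' f t i0
  have hAdj : ∀ t, T.Adj (a t) (a (t + 1)) := by
    intro t; rw [ha_succ t]; exact hadjf (a t)
  have hBig : ∀ t, n < 2 * (S (a t) (a (t + 1))).ncard := by
    intro t; rw [ha_succ t]; exact hbigf (a t)
  have hopp : ∀ i j, T.Adj i j → n < 2 * (S i j).ncard → n < 2 * (S j i).ncard → False := by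
    intro i j hij h1 h2
    have hdisj : Disjoint (S i j) (S j i) := by
      rw [Set.disjoint_left]
      intro v hv1 hv2
      obtain ⟨x0, hx0⟩ := hcov v
      have hm : x0 ∈ TSide T i j ∩ TSide T j i := ⟨hv1 hx0, hv2 hx0⟩
      rw [aux_side_disj htree hij] at hm
      exact hm
    have hle : (S i j).ncard + (S j i).ncard ≤ n := by
      rw [← Set.ncard_union_eq hdisj (Set.toFinite _) (Set.toFinite _)]
      have h := Set.ncard_le_ncard (Set.subset_univ (S i j ∪ S j i)) (Set.toFinite _)
      simpa [Set.ncard_univ, Nat.card_eq_fintype_card] using h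
    omega
  have hstep : ∀ t, a (t + 2) ≠ a t := by
    intro t h
    have h1 := hBig t
    have h2 := hBig (t + 1)
    rw [show t + 1 + 1 = t + 2 from rfl, h] at h2
    exact hopp (a t) (a (t + 1)) (hAdj t) h1 h2
  have hnest : ∀ t, S (a (t + 1)) (a (t + 2)) ⊆ S (a t) (a (t + 1)) := by
    intro t v hv x hx
    exact aux_side_nested htree (hAdj t) (hAdj (t + 1)) (hstep t) (hv hx)
  have hchain : ∀ s t, s ≤ t → S (a t) (a (t + 1)) ⊆ S (a s) (a (s + 1)) := by
    intro s t h
    induction h with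
    | refl => exact Set.Subset.rfl
    | @step m hsm ih => exact Set.Subset.trans (hnest m) ih
  let g : ℕ → ℕ := fun t => (S (a t) (a (t + 1))).ncard
  obtain ⟨t0, ht0⟩ : ∃ t0, ∀ t, g t0 ≤ g t := by
    have hne : (Set.range g).Nonempty := ⟨g 0, 0, rfl⟩
    obtain ⟨t0, hgt0⟩ := Nat.sInf_mem hne
    exact ⟨t0, fun t => hgt0 ▸ Nat.sInf_le ⟨t, rfl⟩⟩
  have heq : ∀ t, t0 ≤ t → S (a t) (a (t + 1)) = S (a t0) (a (t0 + 1)) := by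
    intro t ht
    exact Set.eq_of_subset_of_ncard_le (hchain t0 t ht) (ht0 t) (Set.toFinite _)
  have hSne : (S (a t0) (a (t0 + 1))).Nonempty := by
    rcases Set.eq_empty_or_nonempty (S (a t0) (a (t0 + 1))) with h | h
    · have := hBig t0
      rw [h, Set.ncard_empty] at this
      omega
    · exact h
  obtain ⟨v, hv⟩ := hSne
  have hvall : ∀ t, v ∈ S (a t) (a (t + 1)) := by
    intro t
    rcases le_or_gt t0 t with h | h
    · rw [heq t h]; exact hv
    · exact hchain t t0 h.le hv
  obtain ⟨x, hx⟩ := hcov v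
  have hdesc : ∀ t, T.dist x (a (t + 1)) < T.dist x (a t) := fun t => (hvall t) hx
  have hmono : ∀ t, T.dist x (a t) + t ≤ T.dist x (a 0) := by
    intro t
    induction t with
    | zero => omega
    | succ t ih => have := hdesc t; omega
  have := hmono (T.dist x (a 0) + 1)
  omega

end Centroid

section Grouping
variable {V : Type} [Fintype V]

lemma aux_reachable_avoid {G : SimpleGraph V} {X : Set V} {v w : V}
    (h : (Gavoid G X).Reachable v w) (hv : v ∉ X) : w ∉ X := by
  obtain ⟨p⟩ := h
  induction p with
  | nil => exact hv
  | cons hadj q ih => exact ih hadj.2.2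

/-- A bag-sized set `X` whose removal splits `G` into two parts, each of at
most `2n/3` vertices. -/
lemma exists_balanced_two_parts (G : SimpleGraph V) (k : ℕ) (htw : TreewidthAtMost G k)
    (hk : 4 * (k + 1) ≤ Fintype.card V) :
    ∃ X P Q : Set V, X.ncard ≤ k + 1 ∧ P ∪ X ∪ Q = Set.univ ∧
      Disjoint P X ∧ Disjoint P Q ∧ Disjoint X Q ∧
      (∀ u ∈ P, ∀ v ∈ Q, ¬ G.Adj u v) ∧
      3 * P.ncard ≤ 2 * Fintype.card V ∧ 3 * Q.ncard ≤ 2 * Fintype.card V := by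
  classical
  obtain ⟨X, hX, hcomp⟩ := exists_centroid_bag G k htw
  set n := Fintype.card V with hn
  let K : V → Set V := fun v => {w | (Gavoid G X).Reachable v w}
  have hXc_card : n ≤ X.ncard + Xᶜ.ncard := by
    have := Set.ncard_add_ncard_compl X
    rw [Nat.card_eq_fintype_card] at this
    omega
  have hcompl_le : ∀ P : Set V, P.ncard ≤ n := by
    intro P
    have := Set.ncard_le_ncard (Set.subset_univ P) (Set.toFinite _)
    simpa [Set.ncard_univ, Nat.card_eq_fintype_card] using this
  -- a common construction given a suitable `P`
  have main : ∀ P : Set V, P ⊆ Xᶜ →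
      (∀ v ∈ P, ∀ w, (Gavoid G X).Reachable v w → w ∈ P) →
      n ≤ 3 * P.ncard → 3 * P.ncard ≤ 2 * n →
      ∃ X P Q : Set V, X.ncard ≤ k + 1 ∧ P ∪ X ∪ Q = Set.univ ∧
      Disjoint P X ∧ Disjoint P Q ∧ Disjoint X Q ∧
      (∀ u ∈ P, ∀ v ∈ Q, ¬ G.Adj u v) ∧
      3 * P.ncard ≤ 2 * n ∧ 3 * Q.ncard ≤ 2 * n := by
    intro P hPX hPcl hPlow hPup
    refine ⟨X, P, Xᶜ \ P, hX, ?_, ?_, ?_, ?_, ?_, hPup, ?_⟩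
    · ext x
      simp only [Set.mem_union, Set.mem_diff, Set.mem_compl_iff, Set.mem_univ, iff_true]
      by_cases hx : x ∈ X
      · tauto
      · by_cases hp : x ∈ P <;> tauto
    · rw [Set.disjoint_left]; intro a ha; exact hPX ha
    · rw [Set.disjoint_left]; intro a ha hc; exact hc.2 ha
    · rw [Set.disjoint_left]; intro a ha hc; exact hc.1 ha
    · intro u hu w hw hadj
      exact hw.2 (hPcl u hu w (SimpleGraph.Adj.reachable ⟨hadj, fun h => (hPX hu) h, hw.1⟩))
    · have h1 : (Xᶜ \ P).ncard + P.ncard = Xᶜ.ncard := by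
        rw [Set.ncard_diff_add_ncard_of_subset hPX]
      have h2 : Xᶜ.ncard ≤ n := hcompl_le _
      omega
  -- find a suitable P
  by_cases hbigcomp : ∃ v, v ∉ X ∧ n ≤ 3 * (K v).ncard
  · obtain ⟨v, hv, hlow⟩ := hbigcomp
    refine main (K v) ?_ ?_ hlow ?_
    · intro w hw; exact aux_reachable_avoid hw hv
    · intro u hu w hw; exact Set.mem_setOf.2 ((Set.mem_setOf.1 hu).trans hw)
    · have h1 : 2 * (K v).ncard ≤ n := hcomp v hv
      have h2 := hcompl_le (K v)
      omega
  · push_neg at hbigcomp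
    -- take a minimal suitable P
    set M : Set ℕ := {m | ∃ P : Set V, (P ⊆ Xᶜ ∧
      (∀ v ∈ P, ∀ w, (Gavoid G X).Reachable v w → w ∈ P) ∧ n ≤ 3 * P.ncard) ∧ P.ncard = m}
      with hM
    have hMne : M.Nonempty := by
      refine ⟨Xᶜ.ncard, Xᶜ, ⟨Set.Subset.rfl, ?_, ?_⟩, rfl⟩
      · intro v hv w hw; exact aux_reachable_avoid hw hv
      · omega
    obtain ⟨P, ⟨hPX, hPcl, hPlow⟩, hPcard⟩ := Nat.sInf_mem hMne
    refine main P hPX hPcl hPlow ?_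
    -- show the upper bound via minimality
    have hPne : P.Nonempty := by
      rcases Set.eq_empty_or_nonempty P with h | h
      · rw [h, Set.ncard_empty] at hPlow; omega
      · exact h
    obtain ⟨v, hv⟩ := hPne
    have hvX : v ∉ X := fun h => (hPX hv) h
    have hKsub : K v ⊆ P := fun w hw => hPcl v hv w hw
    have hKne : v ∈ K v := Set.mem_setOf.2 (SimpleGraph.Reachable.refl v)
    have hP' : (P \ K v).ncard + (K v).ncard = P.ncard :=
      Set.ncard_diff_add_ncard_of_subset hKsub
    have hsmall : ¬ (n ≤ 3 * (P \ K v).ncard) := by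
      intro hc
      have hmem : (P \ K v).ncard ∈ M := by
        refine ⟨P \ K v, ⟨fun w hw => hPX hw.1, ?_, hc⟩, rfl⟩
        intro u hu w hw
        refine ⟨hPcl u hu.1 w hw, fun hwK : (Gavoid G X).Reachable v w => hu.2 ?_⟩
        exact Set.mem_setOf.2 (hwK.trans hw.symm)
      have := Nat.sInf_le hmem
      have hlt : (P \ K v).ncard < P.ncard := by
        have : v ∈ P := hv
        have hvnot : v ∉ P \ K v := fun h => h.2 hKne
        have hsub : P \ K v ⊆ P := Set.diff_subset
        have := Set.ncard_lt_ncard (by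
          refine Set.ssubset_iff_of_subset hsub |>.2 ⟨v, hv, fun h => h.2 hKne⟩) (Set.toFinite P)
        exact this
      omega
    have hKsmall := hbigcomp v hvX
    omega

end Grouping

section Master
variable {V : Type} [Fintype V]

lemma aux_master (G : SimpleGraph V) (k : ℕ)
    (A1 B A2 : Set V)
    (hpart : A1 ∪ B ∪ A2 = Set.univ)
    (h1B : Disjoint A1 B) (h12 : Disjoint A1 A2) (hB2 : Disjoint B A2)
    (hedge : ∀ u ∈ A1, ∀ v ∈ A2, ¬ G.Adj u v)
    (X CL CR : Set V)
    (hcover : CL ∪ X ∪ CR = Set.univ)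
    (hdLX : Disjoint CL X) (hdLR : Disjoint CL CR) (hdXR : Disjoint X CR)
    (hnoedge : ∀ u ∈ CL, ∀ v ∈ CR, ¬ G.Adj u v)
    (hXcard : X.ncard ≤ k + 1)
    (hbal1 : Fintype.card V ≤ 4 * (B.ncard + k + 1) + 8 * (CL ∩ A1).ncard)
    (hbal2 : Fintype.card V ≤ 4 * (B.ncard + k + 1) + 8 * (CR ∩ A2).ncard) :
    ∃ (TL XB TR : Set V) (k1 k2 : ℕ),
      TL ∪ XB ∪ TR = B ∧ Disjoint TL XB ∧ Disjoint TL TR ∧ Disjoint XB TR ∧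
      k1 + k2 + XB.ncard ≤ k + 1 ∧
      (∃ L X R, IsTermSep G (A1 ∪ (B \ XB)) TL TR k1 L X R) ∧
      (∃ L X R, IsTermSep G (A2 ∪ (B \ XB)) TL TR k2 L X R) ∧
      (∀ L1 X1 R1 L2 X2 R2,
        IsLeftPushed G (A1 ∪ (B \ XB)) TL TR k1 L1 X1 R1 →
        IsRightPushed G (A2 ∪ (B \ XB)) TL TR k2 L2 X2 R2 →
        (L1 ∪ TL ∪ L2) ∪ (X1 ∪ XB ∪ X2) ∪ (R1 ∪ TR ∪ R2) = Set.univ ∧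
        Disjoint (L1 ∪ TL ∪ L2) (X1 ∪ XB ∪ X2) ∧
        Disjoint (L1 ∪ TL ∪ L2) (R1 ∪ TR ∪ R2) ∧
        Disjoint (X1 ∪ XB ∪ X2) (R1 ∪ TR ∪ R2) ∧
        TL ⊆ L1 ∪ TL ∪ L2 ∧ TR ⊆ R1 ∪ TR ∪ R2 ∧
        (∀ u ∈ L1 ∪ TL ∪ L2, ∀ v ∈ R1 ∪ TR ∪ R2, ¬ G.Adj u v) ∧
        (X1 ∪ XB ∪ X2).ncard ≤ k + 1 ∧
        8 * (L1 ∪ TL ∪ L2).ncard ≤ 7 * Fintype.card V + 4 * (B.ncard + k + 1) ∧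
        8 * (R1 ∪ TR ∪ R2).ncard ≤ 7 * Fintype.card V + 4 * (B.ncard + k + 1)) := by
  classical
  set n := Fintype.card V with hn
  have huniv : ∀ v : V, v ∈ A1 ∨ v ∈ B ∨ v ∈ A2 := by
    intro v
    have : v ∈ A1 ∪ B ∪ A2 := hpart ▸ Set.mem_univ v
    simpa [Set.mem_union, or_assoc] using this
  have hcuniv : ∀ v : V, v ∈ CL ∨ v ∈ X ∨ v ∈ CR := by
    intro v
    have : v ∈ CL ∪ X ∪ CR := hcover ▸ Set.mem_univ v
    simpa [Set.mem_union, or_assoc] using this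
  have e1B : ∀ v, v ∈ A1 → v ∈ B → False := fun v h h' => Set.disjoint_left.mp h1B h h'
  have e12 : ∀ v, v ∈ A1 → v ∈ A2 → False := fun v h h' => Set.disjoint_left.mp h12 h h'
  have eB2 : ∀ v, v ∈ B → v ∈ A2 → False := fun v h h' => Set.disjoint_left.mp hB2 h h'
  have eLX : ∀ v, v ∈ CL → v ∈ X → False := fun v h h' => Set.disjoint_left.mp hdLX h h'
  have eLR : ∀ v, v ∈ CL → v ∈ CR → False := fun v h h' => Set.disjoint_left.mp hdLR h h'
  have eXR : ∀ v, v ∈ X → v ∈ CR → False := fun v h h' => Set.disjoint_left.mp hdXR h h'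
  -- the total count
  have htot : A1.ncard + B.ncard + A2.ncard = n := by
    have hd : Disjoint (A1 ∪ B) A2 := by
      rw [Set.disjoint_left]
      rintro v (h | h) h'
      · exact e12 v h h'
      · exact eB2 v h h'
    have h1 : (A1 ∪ B ∪ A2).ncard = (A1 ∪ B).ncard + A2.ncard :=
      Set.ncard_union_eq hd (Set.toFinite _) (Set.toFinite _)
    have h2 : (A1 ∪ B).ncard = A1.ncard + B.ncard :=
      Set.ncard_union_eq h1B (Set.toFinite _) (Set.toFinite _)
    rw [hpart] at h1
    rw [Set.ncard_univ, Nat.card_eq_fintype_card] at h1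
    omega
  -- the size of X splits into three parts
  have hXsum : (X ∩ A1).ncard + (X ∩ A2).ncard + (X ∩ B).ncard ≤ k + 1 := by
    have hXsplit : (X ∩ A1) ∪ ((X ∩ B) ∪ (X ∩ A2)) = X := by
      ext v
      simp only [Set.mem_union, Set.mem_inter_iff]
      constructor
      · rintro (⟨h, _⟩ | ⟨h, _⟩ | ⟨h, _⟩) <;> exact h
      · intro hv
        rcases huniv v with h | h | h
        · exact Or.inl ⟨hv, h⟩
        · exact Or.inr (Or.inl ⟨hv, h⟩)
        · exact Or.inr (Or.inr ⟨hv, h⟩)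
    have hd1 : Disjoint (X ∩ B) (X ∩ A2) := by
      rw [Set.disjoint_left]; rintro v ⟨_, h1⟩ ⟨_, h2⟩; exact eB2 v h1 h2
    have hd2 : Disjoint (X ∩ A1) ((X ∩ B) ∪ (X ∩ A2)) := by
      rw [Set.disjoint_left]
      rintro v ⟨_, h1⟩ (⟨_, h2⟩ | ⟨_, h2⟩)
      · exact e1B v h1 h2
      · exact e12 v h1 h2
    have hc1 : ((X ∩ B) ∪ (X ∩ A2)).ncard = (X ∩ B).ncard + (X ∩ A2).ncard :=
      Set.ncard_union_eq hd1 (Set.toFinite _) (Set.toFinite _)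
    have hc2 := Set.ncard_union_eq hd2 (Set.toFinite (X ∩ A1)) (Set.toFinite ((X ∩ B) ∪ (X ∩ A2)))
    rw [hXsplit] at hc2
    omega
  -- the witness separations
  have hws1 : IsTermSep G (A1 ∪ (B \ (X ∩ B))) (CL ∩ B) (CR ∩ B) ((X ∩ A1).ncard)
      ((CL ∩ A1) ∪ (CL ∩ B)) (X ∩ A1) ((CR ∩ A1) ∪ (CR ∩ B)) := by
    refine ⟨?_, ?_, ?_, ?_, ?_, ?_, ?_, le_refl _⟩
    · ext v
      simp only [Set.mem_union, Set.mem_inter_iff, Set.mem_diff]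
      constructor
      · rintro (((⟨h1, h2⟩ | ⟨h1, h2⟩) | ⟨h1, h2⟩) | (⟨h1, h2⟩ | ⟨h1, h2⟩))
        · exact Or.inl h2
        · exact Or.inr ⟨h2, fun hc => eLX v h1 hc.1⟩
        · exact Or.inl h2
        · exact Or.inl h2
        · exact Or.inr ⟨h2, fun hc => eXR v hc.1 h1⟩
      · rintro (h | ⟨hB, hXB⟩)
        · rcases hcuniv v with hc | hc | hc
          · exact Or.inl (Or.inl (Or.inl ⟨hc, h⟩))
          · exact Or.inl (Or.inr ⟨hc, h⟩)
          · exact Or.inr (Or.inl ⟨hc, h⟩)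
        · rcases hcuniv v with hc | hc | hc
          · exact Or.inl (Or.inl (Or.inr ⟨hc, hB⟩))
          · exact absurd ⟨hc, hB⟩ hXB
          · exact Or.inr (Or.inr ⟨hc, hB⟩)
    · rw [Set.disjoint_left]; rintro v (⟨h1, _⟩ | ⟨h1, _⟩) ⟨h2, _⟩ <;> exact eLX v h1 h2
    · rw [Set.disjoint_left]; rintro v (⟨h1, _⟩ | ⟨h1, _⟩) (⟨h2, _⟩ | ⟨h2, _⟩) <;> exact eLR v h1 h2
    · rw [Set.disjoint_left]; rintro v ⟨h1, _⟩ (⟨h2, _⟩ | ⟨h2, _⟩) <;> exact eXR v h1 h2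
    · intro v hv; exact Or.inr hv
    · intro v hv; exact Or.inr hv
    · rintro u (hu | hu) v (hv | hv) <;> exact hnoedge u hu.1 v hv.1
  have hws2 : IsTermSep G (A2 ∪ (B \ (X ∩ B))) (CL ∩ B) (CR ∩ B) ((X ∩ A2).ncard)
      ((CL ∩ A2) ∪ (CL ∩ B)) (X ∩ A2) ((CR ∩ A2) ∪ (CR ∩ B)) := by
    refine ⟨?_, ?_, ?_, ?_, ?_, ?_, ?_, le_refl _⟩
    · ext v
      simp only [Set.mem_union, Set.mem_inter_iff, Set.mem_diff]
      constructor
      · rintro (((⟨h1, h2⟩ | ⟨h1, h2⟩) | ⟨h1, h2⟩) | (⟨h1, h2⟩ | ⟨h1, h2⟩))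
        · exact Or.inl h2
        · exact Or.inr ⟨h2, fun hc => eLX v h1 hc.1⟩
        · exact Or.inl h2
        · exact Or.inl h2
        · exact Or.inr ⟨h2, fun hc => eXR v hc.1 h1⟩
      · rintro (h | ⟨hB, hXB⟩)
        · rcases hcuniv v with hc | hc | hc
          · exact Or.inl (Or.inl (Or.inl ⟨hc, h⟩))
          · exact Or.inl (Or.inr ⟨hc, h⟩)
          · exact Or.inr (Or.inl ⟨hc, h⟩)
        · rcases hcuniv v with hc | hc | hc
          · exact Or.inl (Or.inl (Or.inr ⟨hc, hB⟩))
          · exact absurd ⟨hc, hB⟩ hXB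
          · exact Or.inr (Or.inr ⟨hc, hB⟩)
    · rw [Set.disjoint_left]; rintro v (⟨h1, _⟩ | ⟨h1, _⟩) ⟨h2, _⟩ <;> exact eLX v h1 h2
    · rw [Set.disjoint_left]; rintro v (⟨h1, _⟩ | ⟨h1, _⟩) (⟨h2, _⟩ | ⟨h2, _⟩) <;> exact eLR v h1 h2
    · rw [Set.disjoint_left]; rintro v ⟨h1, _⟩ (⟨h2, _⟩ | ⟨h2, _⟩) <;> exact eXR v h1 h2
    · intro v hv; exact Or.inr hv
    · intro v hv; exact Or.inr hv
    · rintro u (hu | hu) v (hv | hv) <;> exact hnoedge u hu.1 v hv.1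
  refine ⟨CL ∩ B, X ∩ B, CR ∩ B, (X ∩ A1).ncard, (X ∩ A2).ncard, ?_, ?_, ?_, ?_, ?_,
    ⟨_, _, _, hws1⟩, ⟨_, _, _, hws2⟩, ?_⟩
  · ext v
    simp only [Set.mem_union, Set.mem_inter_iff]
    constructor
    · rintro ((⟨_, h⟩ | ⟨_, h⟩) | ⟨_, h⟩) <;> exact h
    · intro hv
      rcases hcuniv v with h | h | h
      · exact Or.inl (Or.inl ⟨h, hv⟩)
      · exact Or.inl (Or.inr ⟨h, hv⟩)
      · exact Or.inr ⟨h, hv⟩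
  · rw [Set.disjoint_left]; rintro v ⟨h1, _⟩ ⟨h2, _⟩; exact eLX v h1 h2
  · rw [Set.disjoint_left]; rintro v ⟨h1, _⟩ ⟨h2, _⟩; exact eLR v h1 h2
  · rw [Set.disjoint_left]; rintro v ⟨h1, _⟩ ⟨h2, _⟩; exact eXR v h1 h2
  · omega
  · -- main verification
    intro L1 X1 R1 L2 X2 R2 hP1 hP2
    obtain ⟨⟨hu1, hLX1, hLR1, hXR1, hTL1, hTR1, hE1, hX1c⟩, hpush1⟩ := hP1
    obtain ⟨⟨hu2, hLX2, hLR2, hXR2, hTL2, hTR2, hE2, hX2c⟩, hpush2⟩ := hP2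
    have eL1X1 : ∀ v, v ∈ L1 → v ∈ X1 → False := fun v h h' => Set.disjoint_left.mp hLX1 h h'
    have eL1R1 : ∀ v, v ∈ L1 → v ∈ R1 → False := fun v h h' => Set.disjoint_left.mp hLR1 h h'
    have eX1R1 : ∀ v, v ∈ X1 → v ∈ R1 → False := fun v h h' => Set.disjoint_left.mp hXR1 h h'
    have eL2X2 : ∀ v, v ∈ L2 → v ∈ X2 → False := fun v h h' => Set.disjoint_left.mp hLX2 h h'
    have eL2R2 : ∀ v, v ∈ L2 → v ∈ R2 → False := fun v h h' => Set.disjoint_left.mp hLR2 h h'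
    have eX2R2 : ∀ v, v ∈ X2 → v ∈ R2 → False := fun v h h' => Set.disjoint_left.mp hXR2 h h'
    have hW1of : ∀ v, v ∈ L1 ∪ X1 ∪ R1 → v ∈ A1 ∨ (v ∈ B ∧ v ∉ X) := by
      intro v hv
      rw [hu1] at hv
      rcases hv with h | ⟨hB, hX⟩
      · exact Or.inl h
      · exact Or.inr ⟨hB, fun hx => hX ⟨hx, hB⟩⟩
    have hW1to : ∀ v, v ∈ A1 ∨ (v ∈ B ∧ v ∉ X) → v ∈ L1 ∪ X1 ∪ R1 := by
      intro v hv
      rw [hu1]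
      rcases hv with h | ⟨hB, hX⟩
      · exact Or.inl h
      · exact Or.inr ⟨hB, fun hx => hX hx.1⟩
    have hW2of : ∀ v, v ∈ L2 ∪ X2 ∪ R2 → v ∈ A2 ∨ (v ∈ B ∧ v ∉ X) := by
      intro v hv
      rw [hu2] at hv
      rcases hv with h | ⟨hB, hX⟩
      · exact Or.inl h
      · exact Or.inr ⟨hB, fun hx => hX ⟨hx, hB⟩⟩
    have hW2to : ∀ v, v ∈ A2 ∨ (v ∈ B ∧ v ∉ X) → v ∈ L2 ∪ X2 ∪ R2 := by
      intro v hv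
      rw [hu2]
      rcases hv with h | ⟨hB, hX⟩
      · exact Or.inl h
      · exact Or.inr ⟨hB, fun hx => hX hx.1⟩
    -- structural facts about the six pieces
    have hL1sub : ∀ v, v ∈ L1 → v ∈ A1 ∨ (v ∈ CL ∧ v ∈ B) := by
      intro v hv
      rcases hW1of v (Or.inl (Or.inl hv)) with h | ⟨hB, hX⟩
      · exact Or.inl h
      · rcases hcuniv v with hc | hc | hc
        · exact Or.inr ⟨hc, hB⟩
        · exact absurd hc hX
        · exact absurd (hTR1 ⟨hc, hB⟩) (fun h' => eL1R1 v hv h')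
    have hR1sub : ∀ v, v ∈ R1 → v ∈ A1 ∨ (v ∈ CR ∧ v ∈ B) := by
      intro v hv
      rcases hW1of v (Or.inr hv) with h | ⟨hB, hX⟩
      · exact Or.inl h
      · rcases hcuniv v with hc | hc | hc
        · exact absurd (hTL1 ⟨hc, hB⟩) (fun h' => eL1R1 v h' hv)
        · exact absurd hc hX
        · exact Or.inr ⟨hc, hB⟩
    have hX1sub : ∀ v, v ∈ X1 → v ∈ A1 := by
      intro v hv
      rcases hW1of v (Or.inl (Or.inr hv)) with h | ⟨hB, hX⟩
      · exact h
      · rcases hcuniv v with hc | hc | hc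
        · exact absurd (hTL1 ⟨hc, hB⟩) (fun h' => eL1X1 v h' hv)
        · exact absurd hc hX
        · exact absurd (hTR1 ⟨hc, hB⟩) (fun h' => eX1R1 v hv h')
    have hL2sub : ∀ v, v ∈ L2 → v ∈ A2 ∨ (v ∈ CL ∧ v ∈ B) := by
      intro v hv
      rcases hW2of v (Or.inl (Or.inl hv)) with h | ⟨hB, hX⟩
      · exact Or.inl h
      · rcases hcuniv v with hc | hc | hc
        · exact Or.inr ⟨hc, hB⟩
        · exact absurd hc hX
        · exact absurd (hTR2 ⟨hc, hB⟩) (fun h' => eL2R2 v hv h')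
    have hR2sub : ∀ v, v ∈ R2 → v ∈ A2 ∨ (v ∈ CR ∧ v ∈ B) := by
      intro v hv
      rcases hW2of v (Or.inr hv) with h | ⟨hB, hX⟩
      · exact Or.inl h
      · rcases hcuniv v with hc | hc | hc
        · exact absurd (hTL2 ⟨hc, hB⟩) (fun h' => eL2R2 v h' hv)
        · exact absurd hc hX
        · exact Or.inr ⟨hc, hB⟩
    have hX2sub : ∀ v, v ∈ X2 → v ∈ A2 := by
      intro v hv
      rcases hW2of v (Or.inl (Or.inr hv)) with h | ⟨hB, hX⟩
      · exact h
      · rcases hcuniv v with hc | hc | hc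
        · exact absurd (hTL2 ⟨hc, hB⟩) (fun h' => eL2X2 v h' hv)
        · exact absurd hc hX
        · exact absurd (hTR2 ⟨hc, hB⟩) (fun h' => eX2R2 v hv h')
    -- the three disjointness facts
    have hdisjLM : Disjoint (L1 ∪ (CL ∩ B) ∪ L2) (X1 ∪ (X ∩ B) ∪ X2) := by
      rw [Set.disjoint_left]
      rintro v ((hv | hv) | hv) ((hw | hw) | hw)
      · exact eL1X1 v hv hw
      · rcases hL1sub v hv with h | ⟨h1, h2⟩
        · exact e1B v h hw.2
        · exact eLX v h1 hw.1
      · rcases hL1sub v hv with h | ⟨h1, h2⟩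
        · exact e12 v h (hX2sub v hw)
        · exact eB2 v h2 (hX2sub v hw)
      · exact e1B v (hX1sub v hw) hv.2
      · exact eLX v hv.1 hw.1
      · exact eB2 v hv.2 (hX2sub v hw)
      · rcases hL2sub v hv with h | ⟨h1, h2⟩
        · exact e12 v (hX1sub v hw) h
        · exact e1B v (hX1sub v hw) h2
      · rcases hL2sub v hv with h | ⟨h1, h2⟩
        · exact eB2 v hw.2 h
        · exact eLX v h1 hw.1
      · exact eL2X2 v hv hw
    have hdisjLR : Disjoint (L1 ∪ (CL ∩ B) ∪ L2) (R1 ∪ (CR ∩ B) ∪ R2) := by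
      rw [Set.disjoint_left]
      rintro v ((hv | hv) | hv) ((hw | hw) | hw)
      · exact eL1R1 v hv hw
      · exact eL1R1 v hv (hTR1 hw)
      · rcases hL1sub v hv with h | ⟨h1, h2⟩
        · rcases hR2sub v hw with h' | ⟨h1', h2'⟩
          · exact e12 v h h'
          · exact e1B v h h2'
        · rcases hR2sub v hw with h' | ⟨h1', h2'⟩
          · exact eB2 v h2 h'
          · exact eLR v h1 h1'
      · exact eL1R1 v (hTL1 hv) hw
      · exact eLR v hv.1 hw.1
      · exact eL2R2 v (hTL2 hv) hw
      · rcases hL2sub v hv with h | ⟨h1, h2⟩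
        · rcases hR1sub v hw with h' | ⟨h1', h2'⟩
          · exact e12 v h' h
          · exact eB2 v h2' h
        · rcases hR1sub v hw with h' | ⟨h1', h2'⟩
          · exact e1B v h' h2
          · exact eLR v h1 h1'
      · exact eL2R2 v hv (hTR2 hw)
      · exact eL2R2 v hv hw
    have hdisjMR : Disjoint (X1 ∪ (X ∩ B) ∪ X2) (R1 ∪ (CR ∩ B) ∪ R2) := by
      rw [Set.disjoint_left]
      rintro v ((hv | hv) | hv) ((hw | hw) | hw)
      · exact eX1R1 v hv hw
      · exact e1B v (hX1sub v hv) hw.2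
      · rcases hR2sub v hw with h | ⟨h1, h2⟩
        · exact e12 v (hX1sub v hv) h
        · exact e1B v (hX1sub v hv) h2
      · rcases hR1sub v hw with h | ⟨h1, h2⟩
        · exact e1B v h hv.2
        · exact eXR v hv.1 h1
      · exact eXR v hv.1 hw.1
      · rcases hR2sub v hw with h | ⟨h1, h2⟩
        · exact eB2 v hv.2 h
        · exact eXR v hv.1 h1
      · rcases hR1sub v hw with h | ⟨h1, h2⟩
        · exact e12 v h (hX2sub v hv)
        · exact eB2 v h2 (hX2sub v hv)
      · exact eB2 v hw.2 (hX2sub v hv)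
      · exact eX2R2 v hv hw
    refine ⟨?_, hdisjLM, hdisjLR, hdisjMR, ?_, ?_, ?_, ?_, ?_, ?_⟩
    · -- cover
      apply Set.eq_univ_of_forall
      intro v
      rcases huniv v with h | h | h
      · rcases hW1to v (Or.inl h) with (h' | h') | h'
        · exact Or.inl (Or.inl (Or.inl (Or.inl h')))
        · exact Or.inl (Or.inr (Or.inl (Or.inl h')))
        · exact Or.inr (Or.inl (Or.inl h'))
      · by_cases hX : v ∈ X
        · exact Or.inl (Or.inr (Or.inl (Or.inr ⟨hX, h⟩)))
        · rcases hcuniv v with hc | hc | hc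
          · exact Or.inl (Or.inl (Or.inl (Or.inr ⟨hc, h⟩)))
          · exact absurd hc hX
          · exact Or.inr (Or.inl (Or.inr ⟨hc, h⟩))
      · rcases hW2to v (Or.inl h) with (h' | h') | h'
        · exact Or.inl (Or.inl (Or.inr h'))
        · exact Or.inl (Or.inr (Or.inr h'))
        · exact Or.inr (Or.inr h')
    · intro v hv; exact Or.inl (Or.inr hv)
    · intro v hv; exact Or.inl (Or.inr hv)
    · -- no edges between the two sides
      rintro u ((hu | hu) | hu) v ((hv | hv) | hv)
      · exact hE1 u hu v hv
      · exact hE1 u hu v (hTR1 hv)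
      · rcases hL1sub u hu with h | ⟨h1, h2⟩
        · rcases hR2sub v hv with h' | ⟨h1', h2'⟩
          · exact hedge u h v h'
          · exact hE1 u hu v (hTR1 ⟨h1', h2'⟩)
        · exact hE2 u (hTL2 ⟨h1, h2⟩) v hv
      · exact hE1 u (hTL1 hu) v hv
      · exact hE1 u (hTL1 hu) v (hTR1 hv)
      · exact hE2 u (hTL2 hu) v hv
      · rcases hL2sub u hu with h | ⟨h1, h2⟩
        · rcases hR1sub v hv with h' | ⟨h1', h2'⟩
          · intro hadj; exact hedge v h' u h hadj.symm
          · exact hE2 u hu v (hTR2 ⟨h1', h2'⟩)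
        · exact hE1 u (hTL1 ⟨h1, h2⟩) v hv
      · exact hE2 u hu v (hTR2 hv)
      · exact hE2 u hu v hv
    · -- middle size
      have hm1 : (X1 ∪ (X ∩ B) ∪ X2).ncard ≤ (X1 ∪ (X ∩ B)).ncard + X2.ncard :=
        Set.ncard_union_le _ _
      have hm2 : (X1 ∪ (X ∩ B)).ncard ≤ X1.ncard + (X ∩ B).ncard :=
        Set.ncard_union_le _ _
      omega
    · -- left size bound
      have ha : ((CR ∩ A2) ∪ (CR ∩ B)).ncard = (CR ∩ A2).ncard + (CR ∩ B).ncard := by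
        refine Set.ncard_union_eq ?_ (Set.toFinite _) (Set.toFinite _)
        rw [Set.disjoint_left]; rintro v ⟨_, h1⟩ ⟨_, h2⟩; exact eB2 v h2 h1
      have hpushed := hpush2 _ _ _ hws2
      rw [ha] at hpushed
      have hsub : R2 ⊆ (R1 ∪ (CR ∩ B) ∪ R2) := fun v hv => Or.inr hv
      have hIub : (L1 ∪ (CL ∩ B) ∪ L2).ncard + ((R1 ∪ (CR ∩ B) ∪ R2)).ncard ≤ n := by
        rw [← Set.ncard_union_eq hdisjLR (Set.toFinite _) (Set.toFinite _)]
        have := Set.ncard_le_ncard (Set.subset_univ ((L1 ∪ (CL ∩ B) ∪ L2) ∪ (R1 ∪ (CR ∩ B) ∪ R2)))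
          (Set.toFinite _)
        simpa [Set.ncard_univ, Nat.card_eq_fintype_card] using this
      have hR2le : R2.ncard ≤ (R1 ∪ (CR ∩ B) ∪ R2).ncard :=
        Set.ncard_le_ncard hsub (Set.toFinite _)
      have hleftsub : (L1 ∪ (CL ∩ B) ∪ L2) ⊆ A1 ∪ ((CL ∩ B) ∪ (L2 ∩ A2)) := by
        rintro v ((hv | hv) | hv)
        · rcases hL1sub v hv with h | ⟨h1, h2⟩
          · exact Or.inl h
          · exact Or.inr (Or.inl ⟨h1, h2⟩)
        · exact Or.inr (Or.inl hv)
        · rcases hL2sub v hv with h | ⟨h1, h2⟩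
          · exact Or.inr (Or.inr ⟨hv, h⟩)
          · exact Or.inr (Or.inl ⟨h1, h2⟩)
      have hc1 : (L1 ∪ (CL ∩ B) ∪ L2).ncard ≤ A1.ncard + ((CL ∩ B).ncard + (L2 ∩ A2).ncard) := by
        calc (L1 ∪ (CL ∩ B) ∪ L2).ncard ≤ (A1 ∪ ((CL ∩ B) ∪ (L2 ∩ A2))).ncard :=
              Set.ncard_le_ncard hleftsub (Set.toFinite _)
          _ ≤ A1.ncard + ((CL ∩ B) ∪ (L2 ∩ A2)).ncard := Set.ncard_union_le _ _
          _ ≤ A1.ncard + ((CL ∩ B).ncard + (L2 ∩ A2).ncard) := by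
              have := Set.ncard_union_le (CL ∩ B) (L2 ∩ A2)
              omega
      have hR2split : R2.ncard ≤ (R2 ∩ A2).ncard + (CR ∩ B).ncard := by
        have hsub2 : R2 ⊆ (R2 ∩ A2) ∪ (CR ∩ B) := by
          intro v hv
          rcases hR2sub v hv with h | ⟨h1, h2⟩
          · exact Or.inl ⟨hv, h⟩
          · exact Or.inr ⟨h1, h2⟩
        calc R2.ncard ≤ ((R2 ∩ A2) ∪ (CR ∩ B)).ncard := Set.ncard_le_ncard hsub2 (Set.toFinite _)
          _ ≤ (R2 ∩ A2).ncard + (CR ∩ B).ncard := Set.ncard_union_le _ _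
      have hLRA2 : (L2 ∩ A2).ncard + (R2 ∩ A2).ncard ≤ A2.ncard := by
        have hd : Disjoint (L2 ∩ A2) (R2 ∩ A2) := by
          rw [Set.disjoint_left]; rintro v ⟨h1, _⟩ ⟨h2, _⟩; exact eL2R2 v h1 h2
        rw [← Set.ncard_union_eq hd (Set.toFinite _) (Set.toFinite _)]
        refine Set.ncard_le_ncard ?_ (Set.toFinite _)
        rintro v (⟨_, h⟩ | ⟨_, h⟩) <;> exact h
      have hTLB : (CL ∩ B).ncard ≤ B.ncard :=
        Set.ncard_le_ncard Set.inter_subset_right (Set.toFinite _)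
      omega
    · -- right size bound
      have ha : ((CL ∩ A1) ∪ (CL ∩ B)).ncard = (CL ∩ A1).ncard + (CL ∩ B).ncard := by
        refine Set.ncard_union_eq ?_ (Set.toFinite _) (Set.toFinite _)
        rw [Set.disjoint_left]; rintro v ⟨_, h1⟩ ⟨_, h2⟩; exact e1B v h1 h2
      have hpushed := hpush1 _ _ _ hws1
      rw [ha] at hpushed
      have hsub : L1 ⊆ (L1 ∪ (CL ∩ B) ∪ L2) := fun v hv => Or.inl (Or.inl hv)
      have hIub : (L1 ∪ (CL ∩ B) ∪ L2).ncard + ((R1 ∪ (CR ∩ B) ∪ R2)).ncard ≤ n := by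
        rw [← Set.ncard_union_eq hdisjLR (Set.toFinite _) (Set.toFinite _)]
        have := Set.ncard_le_ncard (Set.subset_univ ((L1 ∪ (CL ∩ B) ∪ L2) ∪ (R1 ∪ (CR ∩ B) ∪ R2)))
          (Set.toFinite _)
        simpa [Set.ncard_univ, Nat.card_eq_fintype_card] using this
      have hL1le : L1.ncard ≤ (L1 ∪ (CL ∩ B) ∪ L2).ncard :=
        Set.ncard_le_ncard hsub (Set.toFinite _)
      have hrightsub : (R1 ∪ (CR ∩ B) ∪ R2) ⊆ A2 ∪ ((CR ∩ B) ∪ (R1 ∩ A1)) := by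
        rintro v ((hv | hv) | hv)
        · rcases hR1sub v hv with h | ⟨h1, h2⟩
          · exact Or.inr (Or.inr ⟨hv, h⟩)
          · exact Or.inr (Or.inl ⟨h1, h2⟩)
        · exact Or.inr (Or.inl hv)
        · rcases hR2sub v hv with h | ⟨h1, h2⟩
          · exact Or.inl h
          · exact Or.inr (Or.inl ⟨h1, h2⟩)
      have hc1 : (R1 ∪ (CR ∩ B) ∪ R2).ncard ≤ A2.ncard + ((CR ∩ B).ncard + (R1 ∩ A1).ncard) := by
        calc (R1 ∪ (CR ∩ B) ∪ R2).ncard ≤ (A2 ∪ ((CR ∩ B) ∪ (R1 ∩ A1))).ncard :=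
              Set.ncard_le_ncard hrightsub (Set.toFinite _)
          _ ≤ A2.ncard + ((CR ∩ B) ∪ (R1 ∩ A1)).ncard := Set.ncard_union_le _ _
          _ ≤ A2.ncard + ((CR ∩ B).ncard + (R1 ∩ A1).ncard) := by
              have := Set.ncard_union_le (CR ∩ B) (R1 ∩ A1)
              omega
      have hL1split : L1.ncard ≤ (L1 ∩ A1).ncard + (CL ∩ B).ncard := by
        have hsub2 : L1 ⊆ (L1 ∩ A1) ∪ (CL ∩ B) := by
          intro v hv
          rcases hL1sub v hv with h | ⟨h1, h2⟩
          · exact Or.inl ⟨hv, h⟩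
          · exact Or.inr ⟨h1, h2⟩
        calc L1.ncard ≤ ((L1 ∩ A1) ∪ (CL ∩ B)).ncard := Set.ncard_le_ncard hsub2 (Set.toFinite _)
          _ ≤ (L1 ∩ A1).ncard + (CL ∩ B).ncard := Set.ncard_union_le _ _
      have hLRA1 : (L1 ∩ A1).ncard + (R1 ∩ A1).ncard ≤ A1.ncard := by
        have hd : Disjoint (L1 ∩ A1) (R1 ∩ A1) := by
          rw [Set.disjoint_left]; rintro v ⟨h1, _⟩ ⟨h2, _⟩; exact eL1R1 v h1 h2
        rw [← Set.ncard_union_eq hd (Set.toFinite _) (Set.toFinite _)]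
        refine Set.ncard_le_ncard ?_ (Set.toFinite _)
        rintro v (⟨_, h⟩ | ⟨_, h⟩) <;> exact h
      have hTRB : (CR ∩ B).ncard ≤ B.ncard :=
        Set.ncard_le_ncard Set.inter_subset_right (Set.toFinite _)
      omega

end Master

theorem statement8 {V : Type} [Fintype V] (G : SimpleGraph V) (k : ℕ)
    (htw : TreewidthAtMost G k)
    (A1 B A2 : Set V)
    (hpart : A1 ∪ B ∪ A2 = Set.univ)
    (h1B : Disjoint A1 B) (h12 : Disjoint A1 A2) (hB2 : Disjoint B A2)
    (hedge : ∀ u ∈ A1, ∀ v ∈ A2, ¬ G.Adj u v)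
    (hA1 : 4 * A1.ncard ≤ 3 * Fintype.card V)
    (hA2 : 4 * A2.ncard ≤ 3 * Fintype.card V) :
    ∃ (TL XB TR : Set V) (k1 k2 : ℕ),
      TL ∪ XB ∪ TR = B ∧ Disjoint TL XB ∧ Disjoint TL TR ∧ Disjoint XB TR ∧
      k1 + k2 + XB.ncard ≤ k + 1 ∧
      (∃ L X R, IsTermSep G (A1 ∪ (B \ XB)) TL TR k1 L X R) ∧
      (∃ L X R, IsTermSep G (A2 ∪ (B \ XB)) TL TR k2 L X R) ∧
      (∀ L1 X1 R1 L2 X2 R2,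
        IsLeftPushed G (A1 ∪ (B \ XB)) TL TR k1 L1 X1 R1 →
        IsRightPushed G (A2 ∪ (B \ XB)) TL TR k2 L2 X2 R2 →
        (L1 ∪ TL ∪ L2) ∪ (X1 ∪ XB ∪ X2) ∪ (R1 ∪ TR ∪ R2) = Set.univ ∧
        Disjoint (L1 ∪ TL ∪ L2) (X1 ∪ XB ∪ X2) ∧
        Disjoint (L1 ∪ TL ∪ L2) (R1 ∪ TR ∪ R2) ∧
        Disjoint (X1 ∪ XB ∪ X2) (R1 ∪ TR ∪ R2) ∧
        TL ⊆ L1 ∪ TL ∪ L2 ∧ TR ⊆ R1 ∪ TR ∪ R2 ∧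
        (∀ u ∈ L1 ∪ TL ∪ L2, ∀ v ∈ R1 ∪ TR ∪ R2, ¬ G.Adj u v) ∧
        (X1 ∪ XB ∪ X2).ncard ≤ k + 1 ∧
        8 * (L1 ∪ TL ∪ L2).ncard ≤ 7 * Fintype.card V + 4 * (B.ncard + k + 1) ∧
        8 * (R1 ∪ TR ∪ R2).ncard ≤ 7 * Fintype.card V + 4 * (B.ncard + k + 1)) := by
  classical
  set n := Fintype.card V with hn
  by_cases hsmall : n ≤ 4 * (B.ncard + k + 1)
  · -- if `B` is big, a trivial choice works
    refine aux_master G k A1 B A2 hpart h1B h12 hB2 hedge ∅ Set.univ ∅ (by simp) (by simp)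
      (by simp) (by simp) ?_ (by simp) ?_ ?_
    · intro u _ v hv; exact absurd hv (Set.notMem_empty v)
    · have : ((Set.univ : Set V) ∩ A1) = A1 := Set.univ_inter A1
      omega
    · have : ((∅ : Set V) ∩ A2) = ∅ := Set.empty_inter A2
      rw [this, Set.ncard_empty]
      omega
  · push_neg at hsmall
    have hk4 : 4 * (k + 1) ≤ n := by omega
    obtain ⟨X, P, Q, hX, hcov, hdPX, hdPQ, hdXQ, hnoedgePQ, hP3, hQ3⟩ :=
      exists_balanced_two_parts G k htw hk4
    -- counting facts
    have huniv : ∀ v : V, v ∈ A1 ∨ v ∈ B ∨ v ∈ A2 := by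
      intro v
      have : v ∈ A1 ∪ B ∪ A2 := hpart ▸ Set.mem_univ v
      simpa [Set.mem_union, or_assoc] using this
    have hcuniv : ∀ v : V, v ∈ P ∨ v ∈ X ∨ v ∈ Q := by
      intro v
      have : v ∈ P ∪ X ∪ Q := hcov ▸ Set.mem_univ v
      simpa [Set.mem_union, or_assoc] using this
    have htot : A1.ncard + B.ncard + A2.ncard = n := by
      have hd : Disjoint (A1 ∪ B) A2 := by
        rw [Set.disjoint_left]
        rintro v (h | h) h'
        · exact Set.disjoint_left.mp h12 h h'
        · exact Set.disjoint_left.mp hB2 h h'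
      have h1 : (A1 ∪ B ∪ A2).ncard = (A1 ∪ B).ncard + A2.ncard :=
        Set.ncard_union_eq hd (Set.toFinite _) (Set.toFinite _)
      have h2 : (A1 ∪ B).ncard = A1.ncard + B.ncard :=
        Set.ncard_union_eq h1B (Set.toFinite _) (Set.toFinite _)
      rw [hpart, Set.ncard_univ, Nat.card_eq_fintype_card] at h1
      omega
    have hle3 : ∀ (S T U W : Set V), W ⊆ S ∪ T ∪ U →
        W.ncard ≤ S.ncard + T.ncard + U.ncard := by
      intro S T U W hsub
      calc W.ncard ≤ (S ∪ T ∪ U).ncard := Set.ncard_le_ncard hsub (Set.toFinite _)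
        _ ≤ (S ∪ T).ncard + U.ncard := Set.ncard_union_le _ _
        _ ≤ S.ncard + T.ncard + U.ncard := by
            have := Set.ncard_union_le S T
            omega
    have f1 : A1.ncard ≤ (P ∩ A1).ncard + (Q ∩ A1).ncard + X.ncard := by
      refine hle3 _ _ _ _ ?_
      intro v hv
      rcases hcuniv v with h | h | h
      · exact Or.inl (Or.inl ⟨h, hv⟩)
      · exact Or.inr h
      · exact Or.inl (Or.inr ⟨h, hv⟩)
    have f2 : A2.ncard ≤ (P ∩ A2).ncard + (Q ∩ A2).ncard + X.ncard := by
      refine hle3 _ _ _ _ ?_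
      intro v hv
      rcases hcuniv v with h | h | h
      · exact Or.inl (Or.inl ⟨h, hv⟩)
      · exact Or.inr h
      · exact Or.inl (Or.inr ⟨h, hv⟩)
    have f3 : P.ncard ≤ (P ∩ A1).ncard + (P ∩ A2).ncard + B.ncard := by
      refine hle3 _ _ _ _ ?_
      intro v hv
      rcases huniv v with h | h | h
      · exact Or.inl (Or.inl ⟨hv, h⟩)
      · exact Or.inr h
      · exact Or.inl (Or.inr ⟨hv, h⟩)
    have f4 : Q.ncard ≤ (Q ∩ A1).ncard + (Q ∩ A2).ncard + B.ncard := by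
      refine hle3 _ _ _ _ ?_
      intro v hv
      rcases huniv v with h | h | h
      · exact Or.inl (Or.inl ⟨hv, h⟩)
      · exact Or.inr h
      · exact Or.inl (Or.inr ⟨hv, h⟩)
    have f5 : n ≤ P.ncard + X.ncard + Q.ncard := by
      have := hle3 P X Q Set.univ (by rw [hcov])
      rwa [Set.ncard_univ, Nat.card_eq_fintype_card] at this
    by_cases c1 : n ≤ 4 * (B.ncard + k + 1) + 8 * (P ∩ A1).ncard ∧
        n ≤ 4 * (B.ncard + k + 1) + 8 * (Q ∩ A2).ncard
    · exact aux_master G k A1 B A2 hpart h1B h12 hB2 hedge X P Q hcov hdPX hdPQ hdXQ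
        hnoedgePQ hX c1.1 c1.2
    · by_cases c2 : n ≤ 4 * (B.ncard + k + 1) + 8 * (Q ∩ A1).ncard ∧
          n ≤ 4 * (B.ncard + k + 1) + 8 * (P ∩ A2).ncard
      · have hcov' : Q ∪ X ∪ P = Set.univ := by
          rw [← hcov]
          ext v
          simp only [Set.mem_union]
          tauto
        refine aux_master G k A1 B A2 hpart h1B h12 hB2 hedge X Q P hcov' hdXQ.symm
          hdPQ.symm hdPX.symm ?_ hX c2.1 c2.2
        · intro u hu v hv hadj
          exact hnoedgePQ v hv u hu hadj.symm
      · exfalso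
        omega
end

section
/- Let G be a finite graph, S ⊆ V(G), and X ⊆ V(G) a set such that every connected component of G − X contains at most |S|/2 vertices of S. Then there exists a partition (L, R) of V(G) ∖ X such that no edge of G joins a vertex of L to a vertex of R, |L ∩ S| ≤ (2/3)|S|, and |R ∩ S| ≤ (2/3)|S|. -/
open SimpleGraph

private lemma ncard_biUnion_eq {V : Type} [Fintype V] {ι : Type} [DecidableEq ι]
    (T : Finset ι) (g : ι → Set V)
    (hdisj : ∀ i ∈ T, ∀ j ∈ T, i ≠ j → Disjoint (g i) (g j)) :
    (⋃ i ∈ T, g i).ncard = ∑ i ∈ T, (g i).ncard := by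
  classical
  induction T using Finset.induction with
  | empty => simp
  | @insert a T' hi ih =>
    rw [Finset.sum_insert hi]
    have hU : (⋃ i ∈ insert a T', g i) = g a ∪ ⋃ i ∈ T', g i := by
      simp [Set.biUnion_insert]
    rw [hU, Set.ncard_union_eq, ih]
    · intro i hi' j hj' hij
      exact hdisj i (Finset.mem_insert_of_mem hi') j (Finset.mem_insert_of_mem hj') hij
    · rw [Set.disjoint_iff_forall_ne]
      intro x hx y hy hxy
      simp only [Set.mem_iUnion] at hy
      obtain ⟨i, hiT, hyi⟩ := hy
      have : Disjoint (g a) (g i) := by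
        refine hdisj a (Finset.mem_insert_self a T') i (Finset.mem_insert_of_mem hiT) ?_
        rintro rfl; exact hi hiT
      exact Set.disjoint_iff_forall_ne.mp this hx hyi hxy

theorem statement10 {V : Type} [Fintype V] (G : SimpleGraph V) (S X : Set V)
    (h : BalancedSSep G S X) :
    ∃ L R : Set V,
      L ∪ R = Xᶜ ∧ Disjoint L R ∧
      (∀ u ∈ L, ∀ v ∈ R, ¬ G.Adj u v) ∧
      3 * (L ∩ S).ncard ≤ 2 * S.ncard ∧
      3 * (R ∩ S).ncard ≤ 2 * S.ncard := by
  classical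
  set H := G.induce Xᶜ with hH
  haveI : Fintype H.ConnectedComponent := Fintype.ofFinite _
  set f : H.ConnectedComponent → Set V := fun c => Subtype.val '' c.supp with hf
  set w : H.ConnectedComponent → ℕ := fun c => (f c ∩ S).ncard with hw
  -- pairwise disjointness of the f c
  have hfd : ∀ c c' : H.ConnectedComponent, c ≠ c' → Disjoint (f c) (f c') := by
    intro c c' hne
    have := H.pairwise_disjoint_supp_connectedComponent hne
    exact (Set.disjoint_image_iff Subtype.val_injective).mpr this
  have hfsub : ∀ c : H.ConnectedComponent, f c ⊆ Xᶜ := by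
    rintro c x ⟨y, _, rfl⟩; exact y.2
  -- the filter of admissible finsets
  set s := S.ncard with hs
  set P : Finset H.ConnectedComponent → Prop :=
    fun T => 3 * ∑ c ∈ T, w c ≤ 2 * s with hP
  have hne : (Finset.univ.filter fun T => 3 * ∑ c ∈ T, w c ≤ 2 * s).Nonempty := by
    refine ⟨∅, ?_⟩
    simp
  obtain ⟨T, hT, hTmax⟩ := Finset.exists_max_image _ (fun T => ∑ c ∈ T, w c) hne
  rw [Finset.mem_filter] at hT
  have hTle : 3 * ∑ c ∈ T, w c ≤ 2 * s := hT.2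
  set L : Set V := ⋃ c ∈ T, f c with hL
  set R : Set V := ⋃ c ∈ Tᶜ, f c with hR
  -- L ∪ R = Xᶜ
  have hunion : L ∪ R = Xᶜ := by
    apply Set.Subset.antisymm
    · rintro x hx
      rcases hx with hx | hx <;>
      · simp only [hL, hR, Set.mem_iUnion] at hx
        obtain ⟨c, _, hc⟩ := hx
        exact hfsub c hc
    · intro x hx
      have : (⟨x, hx⟩ : ↥Xᶜ) ∈ (H.connectedComponentMk ⟨x, hx⟩).supp := rfl
      have hxm : x ∈ f (H.connectedComponentMk ⟨x, hx⟩) := ⟨⟨x, hx⟩, this, rfl⟩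
      by_cases hc : H.connectedComponentMk ⟨x, hx⟩ ∈ T
      · exact Or.inl (Set.mem_biUnion hc hxm)
      · exact Or.inr (Set.mem_biUnion (Finset.mem_compl.mpr hc) hxm)
  -- disjointness
  have hdisj : Disjoint L R := by
    rw [Set.disjoint_left]
    intro x hxL hxR
    simp only [hL, hR, Set.mem_iUnion] at hxL hxR
    obtain ⟨c, hcT, hxc⟩ := hxL
    obtain ⟨c', hc'T, hxc'⟩ := hxR
    have hne2 : c ≠ c' := by rintro rfl; exact (Finset.mem_compl.mp hc'T) hcT
    exact Set.disjoint_left.mp (hfd c c' hne2) hxc hxc'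
  -- membership in f c determines the component
  have hmem : ∀ (x : V) (hx : x ∈ Xᶜ) (c : H.ConnectedComponent),
      x ∈ f c → H.connectedComponentMk ⟨x, hx⟩ = c := by
    rintro x hx c ⟨y, hy, hyx⟩
    have : y = ⟨x, hx⟩ := Subtype.ext hyx
    rw [← this]; exact hy
  -- no adjacency
  have hadj : ∀ u ∈ L, ∀ v ∈ R, ¬ G.Adj u v := by
    intro u hu v hv huv
    have huX : u ∈ Xᶜ := hunion ▸ Or.inl hu
    have hvX : v ∈ Xᶜ := hunion ▸ Or.inr hv
    simp only [hL, hR, Set.mem_iUnion] at hu hv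
    obtain ⟨c, hcT, huc⟩ := hu
    obtain ⟨c', hc'T, hvc⟩ := hv
    have hHadj : H.Adj ⟨u, huX⟩ ⟨v, hvX⟩ := by
      simp only [hH, comap_adj, Function.Embedding.coe_subtype]
      exact huv
    have hcc : H.connectedComponentMk ⟨u, huX⟩ = H.connectedComponentMk ⟨v, hvX⟩ :=
      ConnectedComponent.connectedComponentMk_eq_of_adj hHadj
    rw [hmem u huX c huc, hmem v hvX c' hvc] at hcc
    subst hcc
    exact (Finset.mem_compl.mp hc'T) hcT
  -- cardinalities
  have hcard : ∀ T' : Finset H.ConnectedComponent,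
      ((⋃ c ∈ T', f c) ∩ S).ncard = ∑ c ∈ T', w c := by
    intro T'
    have : (⋃ c ∈ T', f c) ∩ S = ⋃ c ∈ T', (f c ∩ S) := by
      ext x; simp only [Set.mem_inter_iff, Set.mem_iUnion]; tauto
    rw [this, ncard_biUnion_eq]
    intro i _ j _ hij
    exact Disjoint.mono Set.inter_subset_left Set.inter_subset_left (hfd i j hij)
  have hLS : (L ∩ S).ncard = ∑ c ∈ T, w c := hcard T
  have hRS : (R ∩ S).ncard = ∑ c ∈ Tᶜ, w c := hcard Tᶜ
  -- total bound
  have htot : ∑ c ∈ T, w c + ∑ c ∈ Tᶜ, w c ≤ s := by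
    rw [← hLS, ← hRS]
    have : (L ∩ S).ncard + (R ∩ S).ncard = ((L ∩ S) ∪ (R ∩ S)).ncard := by
      rw [Set.ncard_union_eq]
      exact Disjoint.mono Set.inter_subset_left Set.inter_subset_left hdisj
    rw [this]
    exact Set.ncard_le_ncard (by intro x hx; rcases hx with hx | hx <;> exact hx.2) S.toFinite
  refine ⟨L, R, hunion, hdisj, hadj, by rw [hLS]; exact hTle, ?_⟩
  -- the remaining bound on R, by contradiction
  rw [hRS]
  by_contra hcon
  push_neg at hcon
  have hRpos : 0 < ∑ c ∈ Tᶜ, w c := by omega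
  obtain ⟨c, hcTc, hcpos⟩ : ∃ c ∈ Tᶜ, 0 < w c := by
    by_contra hno
    push_neg at hno
    have : ∑ c ∈ Tᶜ, w c = 0 := Finset.sum_eq_zero fun c hc => Nat.le_zero.mp (hno c hc)
    omega
  have hcs : 2 * w c ≤ s := h c
  -- singleton {c} is admissible, so w c ≤ ∑_T w
  have hsingle : ({c} : Finset H.ConnectedComponent) ∈
      Finset.univ.filter fun T => 3 * ∑ c ∈ T, w c ≤ 2 * s := by
    rw [Finset.mem_filter]
    constructor
    · exact Finset.mem_univ _
    · rw [Finset.sum_singleton]; omega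
  have hc_le : w c ≤ ∑ c ∈ T, w c := by
    have := hTmax _ hsingle
    simpa using this
  -- insert c T is not admissible (since its sum exceeds T's)
  have hins : ¬ (3 * ∑ c' ∈ insert c T, w c' ≤ 2 * s) := by
    intro hmem'
    have := hTmax (insert c T) (Finset.mem_filter.mpr ⟨Finset.mem_univ _, hmem'⟩)
    rw [Finset.sum_insert (Finset.mem_compl.mp hcTc)] at this
    omega
  rw [Finset.sum_insert (Finset.mem_compl.mp hcTc)] at hins
  push_neg at hins
  omega
end

section
/- Let G be a finite graph with treewidth at most k and let S ⊆ V(G). Then there exists a partition (L, X, R) of V(G) with |X| ≤ k+1 such that no edge of G joins a vertex of L to a vertex of R, |L ∩ S| ≤ (2/3)|S|, and |R ∩ S| ≤ (2/3)|S|. -/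
open SimpleGraph

namespace TWsep

variable {V ι : Type}

/-- The graph `G` with all vertices of `X` deleted (made isolated). -/
def Del (G : SimpleGraph V) (X : Set V) : SimpleGraph V where
  Adj u v := G.Adj u v ∧ u ∉ X ∧ v ∉ X
  symm := ⟨fun u v ⟨h, hu, hv⟩ => ⟨h.symm, hv, hu⟩⟩
  loopless := ⟨fun v h => G.loopless.irrefl v h.1⟩

/-- The connected component of `v` in `G - X`. -/
def comp (G : SimpleGraph V) (X : Set V) (v : V) : Set V :=
  {w | (Del G X).Reachable v w}

lemma mem_comp_self {G : SimpleGraph V} {X : Set V} {v : V} : v ∈ comp G X v :=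
  Reachable.refl v

lemma comp_eq_of_mem {G : SimpleGraph V} {X : Set V} {u w : V} (h : w ∈ comp G X u) :
    comp G X w = comp G X u :=
  Set.ext fun _x => ⟨fun hx => Reachable.trans h hx, fun hx => Reachable.trans (Reachable.symm h) hx⟩

lemma exists_walk_same_support {G : SimpleGraph V} {X : Set V} {u v : V}
    (p : (Del G X).Walk u v) : ∃ q : G.Walk u v, q.support = p.support := by
  induction p with
  | nil => exact ⟨Walk.nil, rfl⟩
  | cons h p ih =>
    obtain ⟨q, hq⟩ := ih
    exact ⟨Walk.cons h.1 q, by simp [hq]⟩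

lemma reach_del_of_walk {G : SimpleGraph V} {Y : Set V} {u v : V}
    (p : G.Walk u v) (h : ∀ w ∈ p.support, w ∉ Y) : (Del G Y).Reachable u v := by
  induction p with
  | nil => exact Reachable.refl _
  | @cons a b c hadj q ih =>
    have hab : (Del G Y).Adj a b := ⟨hadj, h a (by simp), h b (by simp)⟩
    refine hab.reachable.trans (ih ?_)
    intro w hw
    exact h w (by simp [hw])

lemma del_support_not_mem {G : SimpleGraph V} {X : Set V} {u v : V}
    (p : (Del G X).Walk u v) (hu : u ∉ X) : ∀ w ∈ p.support, w ∉ X := by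
  induction p with
  | nil => simpa using hu
  | @cons a b c hadj q ih =>
    intro w hw
    rcases List.mem_cons.mp (by simpa using hw) with h1 | h2
    · exact h1 ▸ hu
    · exact ih hadj.2.2 w h2

lemma walk_support_mem_comp {G : SimpleGraph V} {X : Set V} {u v : V}
    (p : (Del G X).Walk u v) : ∀ w ∈ p.support, (Del G X).Reachable u w := by
  induction p with
  | nil => intro w hw; simp at hw; exact hw ▸ Reachable.refl _
  | @cons a b c hadj q ih =>
    intro w hw
    rcases List.mem_cons.mp (by simpa using hw) with h1 | h2
    · exact h1 ▸ Reachable.refl _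
    · exact (Adj.reachable hadj).trans (ih w h2)

lemma comp_subset_compl {G : SimpleGraph V} {X : Set V} {v : V} (hv : v ∉ X) :
    comp G X v ⊆ Xᶜ := by
  intro w hw
  obtain ⟨p⟩ := hw
  exact del_support_not_mem p hv w p.end_mem_support


section TD

variable {G : SimpleGraph V} {T : SimpleGraph ι} {bag : ι → Set V}

/-- The bag-subtree of a vertex avoids `i` and is connected, hence lives in one
component of `T - i`. -/
lemma subtree_reach {v : V} (hconn : (T.induce {t | v ∈ bag t}).Connected) {i : ι}
    (hi : v ∉ bag i) {t t' : ι} (ht : v ∈ bag t) (ht' : v ∈ bag t') :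
    (Del T ({i} : Set ι)).Reachable t t' := by
  have h : (T.induce {t | v ∈ bag t}).Reachable ⟨t, ht⟩ ⟨t', ht'⟩ := hconn ⟨t, ht⟩ ⟨t', ht'⟩
  exact h.map (⟨Subtype.val, fun {a b} hab =>
    ⟨hab, fun h' => hi (h' ▸ a.2), fun h' => hi (h' ▸ b.2)⟩⟩ :
      T.induce {t | v ∈ bag t} →g Del T ({i} : Set ι))

variable (hd : IsTreeDecomp G T bag)
include hd

lemma adj_subtree_reach {i : ι} {u w : V} {t t' : ι} (hu : u ∉ bag i) (hw : w ∉ bag i)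
    (hadj : G.Adj u w) (ht : u ∈ bag t) (ht' : w ∈ bag t') :
    (Del T ({i} : Set ι)).Reachable t t' := by
  obtain ⟨t₀, h1, h2⟩ := hd.2.2.1 u w hadj
  exact (subtree_reach (hd.2.2.2 u) hu ht h1).trans (subtree_reach (hd.2.2.2 w) hw h2 ht')

lemma comp_subtree_reach_aux {i : ι} {u w : V} (p : (Del G (bag i)).Walk u w)
    (hu : u ∉ bag i) {t t' : ι} (ht : u ∈ bag t) (ht' : w ∈ bag t') :
    (Del T ({i} : Set ι)).Reachable t t' := by
  induction p generalizing t with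
  | nil => exact subtree_reach (hd.2.2.2 _) hu ht ht'
  | @cons a b c hadj q ih =>
    obtain ⟨tb, hb⟩ := hd.2.1 b
    exact (adj_subtree_reach hd hadj.2.1 hadj.2.2 hadj.1 ht hb).trans (ih hadj.2.2 hb ht')

/-- All bag-subtrees of vertices of a component of `G - bag i` are in the same
component of `T - i`. -/
lemma comp_subtree_reach {i : ι} {u w : V} (hu : u ∉ bag i) (hw : w ∈ comp G (bag i) u)
    {t t' : ι} (ht : u ∈ bag t) (ht' : w ∈ bag t') :
    (Del T ({i} : Set ι)).Reachable t t' := by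
  obtain ⟨p⟩ := hw
  exact comp_subtree_reach_aux hd p hu ht ht'

end TD

lemma heavy_card [Fintype V] {A B S : Set V} (hdisj : Disjoint A B)
    (h1 : S.ncard < 2 * (A ∩ S).ncard) (h2 : S.ncard < 2 * (B ∩ S).ncard) : False := by
  have hsub : (A ∩ S) ∪ (B ∩ S) ⊆ S :=
    Set.union_subset Set.inter_subset_right Set.inter_subset_right
  have hd2 : Disjoint (A ∩ S) (B ∩ S) :=
    hdisj.mono Set.inter_subset_left Set.inter_subset_left
  have hc := Set.ncard_le_ncard hsub (Set.toFinite S)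
  rw [Set.ncard_union_eq hd2 (Set.toFinite _) (Set.toFinite _)] at hc
  omega

lemma exists_good_bag [Fintype V] (hι : Nonempty ι)
    {G : SimpleGraph V} {T : SimpleGraph ι} {bag : ι → Set V}
    (hd : IsTreeDecomp G T bag) (S : Set V) :
    ∃ i : ι, ∀ v, v ∉ bag i → 2 * (comp G (bag i) v ∩ S).ncard ≤ S.ncard := by
  by_contra hbad
  push_neg at hbad
  choose vb hvb hheavy using hbad
  set C : ι → Set V := fun i => comp G (bag i) (vb i) with hCdef
  have hheavyC : ∀ i, S.ncard < 2 * (C i ∩ S).ncard := fun i => hheavy i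
  have hCne : ∀ i, (C i ∩ S).Nonempty := fun i =>
    Set.nonempty_of_ncard_ne_zero (by have := hheavyC i; omega)
  have hCcompl : ∀ i, C i ⊆ (bag i)ᶜ := fun i => comp_subset_compl (hvb i)
  have huniq : ∀ i (w : V), w ∉ bag i → S.ncard < 2 * (comp G (bag i) w ∩ S).ncard →
      comp G (bag i) w = C i := by
    intro i w hw hheavy'
    by_contra hne
    have hdisj : Disjoint (comp G (bag i) w) (C i) := by
      rw [Set.disjoint_left]
      intro x hx hx'
      exact hne ((comp_eq_of_mem hx).symm.trans (comp_eq_of_mem hx'))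
    exact heavy_card hdisj hheavy' (hheavyC i)
  classical
  let Dst : ι → V → ℕ := fun i u => sInf {n | ∃ t, u ∈ bag t ∧ T.dist i t = n}
  let P : ι × V → Prop := fun p => p.2 ∈ C p.1 ∩ S
  let M : Set ℕ := {n | ∃ p, P p ∧ (C p.1 ∩ S).ncard = n}
  have hMne : M.Nonempty := by
    obtain ⟨i0⟩ := hι
    obtain ⟨u0, hu0⟩ := hCne i0
    exact ⟨_, ⟨(i0, u0), hu0, rfl⟩⟩
  set m := sInf M with hm
  obtain ⟨⟨i1, u1⟩, hP1, hcard1⟩ := Nat.sInf_mem hMne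
  let DS : Set ℕ := {n | ∃ p, P p ∧ (C p.1 ∩ S).ncard = m ∧ Dst p.1 p.2 = n}
  have hDSne : DS.Nonempty := ⟨_, ⟨(i1, u1), hP1, hcard1, rfl⟩⟩
  set d := sInf DS with hdd
  obtain ⟨⟨i, u⟩, hPu', hcardm', hdist'⟩ := Nat.sInf_mem hDSne
  have hPu : u ∈ C i ∩ S := hPu'
  have hcardm : (C i ∩ S).ncard = m := hcardm'
  have hdist : Dst i u = d := hdist'
  have hmin1 : ∀ j w, P (j, w) → m ≤ (C j ∩ S).ncard := fun j w h =>
    Nat.sInf_le ⟨(j, w), h, rfl⟩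
  have hmin2 : ∀ j w, P (j, w) → (C j ∩ S).ncard = m → d ≤ Dst j w :=
    fun j w h h' => Nat.sInf_le ⟨(j, w), h, h', rfl⟩
  have huC : u ∈ C i := hPu.1
  have huS : u ∈ S := hPu.2
  have hubag : u ∉ bag i := hCcompl i huC
  have hDstne : {n | ∃ t, u ∈ bag t ∧ T.dist i t = n}.Nonempty := by
    obtain ⟨t, ht⟩ := hd.2.1 u
    exact ⟨_, t, ht, rfl⟩
  obtain ⟨t, hut, hdt⟩ := Nat.sInf_mem hDstne
  have hdt2 : T.dist i t = d := by rw [hdt]; exact hdist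
  have hit : i ≠ t := by rintro rfl; exact hubag hut
  have hd0 : 0 < d := hdt2 ▸ hd.1.1.pos_dist_of_ne hit
  obtain ⟨w0, hw0⟩ := hd.1.1.exists_walk_length_eq_dist i t
  have hbp : w0.bypass.length = d := by
    have h1 := Walk.length_bypass_le w0
    have h2 := dist_le w0.bypass
    omega
  obtain ⟨j, hij, q, heq⟩ := Walk.exists_eq_cons_of_ne hit w0.bypass
  have hpath : (Walk.cons hij q).IsPath := heq ▸ w0.bypass_isPath
  rw [Walk.cons_isPath_iff] at hpath
  have hqlen : q.length + 1 = d := by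
    have h3 : (Walk.cons hij q).length = d := heq ▸ hbp
    simpa using h3
  have hjt : (Del T ({i} : Set ι)).Reachable j t :=
    reach_del_of_walk q (fun w hw hwi =>
      hpath.2 (by rwa [Set.mem_singleton_iff.mp hwi] at hw))
  have hCieq : comp G (bag i) u = C i := comp_eq_of_mem huC
  have hbranch : ∀ w ∈ C i, ∀ t', w ∈ bag t' → (Del T ({i} : Set ι)).Reachable t t' := by
    intro w hw t' ht'
    exact comp_subtree_reach hd hubag (by rw [hCieq]; exact hw) hut ht'
  obtain ⟨t₀, ht₀⟩ := hd.2.1 (vb j)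
  have hbranchj : ∀ w ∈ C j, ∀ t', w ∈ bag t' → (Del T ({j} : Set ι)).Reachable t₀ t' :=
    fun w hw t' ht' => comp_subtree_reach hd (hvb j) hw ht₀ ht'
  by_cases hcase : (Del T ({j} : Set ι)).Reachable i t₀
  · -- the heavy component of `j` lies on the `i`-side of the tree edge `ij`:
    -- then the heavy components of `i` and of `j` are disjoint, contradiction.
    have hdisj : Disjoint (C i) (C j) := by
      rw [Set.disjoint_left]
      intro w hwi hwj
      obtain ⟨ts, hts⟩ := hd.2.1 w
      have r1 : (Del T ({i} : Set ι)).Reachable j ts := hjt.trans (hbranch w hwi ts hts)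
      have r2 : (Del T ({j} : Set ι)).Reachable i ts := hcase.trans (hbranchj w hwj ts hts)
      obtain ⟨p1'⟩ := r1
      obtain ⟨q1, hq1⟩ := exists_walk_same_support p1'
      have hq1i : i ∉ q1.support := by
        rw [hq1]
        intro hmem
        exact del_support_not_mem p1' (by simpa using hij.ne') i hmem rfl
      obtain ⟨p2'⟩ := r2
      obtain ⟨q2, hq2⟩ := exists_walk_same_support p2'
      have hq2j : j ∉ q2.support := by
        rw [hq2]
        intro hmem
        exact del_support_not_mem p2' (by simpa using hij.ne) j hmem rfl
      have hP1 : (Walk.cons hij (q1.toPath : T.Walk j ts)).IsPath := by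
        rw [Walk.cons_isPath_iff]
        exact ⟨q1.toPath.2, fun hmem => hq1i (Walk.support_toPath_subset q1 hmem)⟩
      have hpeq := isAcyclic_iff_path_unique.mp hd.1.2
        ⟨Walk.cons hij (q1.toPath : T.Walk j ts), hP1⟩ q2.toPath
      have hjmem : j ∈ (Walk.cons hij (q1.toPath : T.Walk j ts)).support := by
        rw [Walk.support_cons]
        exact List.mem_cons.mpr (Or.inr (Walk.start_mem_support _))
      have hjmem2 : j ∈ (q2.toPath : T.Walk i ts).support := by
        rw [← congrArg Subtype.val hpeq]
        exact hjmem
      exact hq2j (Walk.support_toPath_subset q2 hjmem2)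
    exact heavy_card hdisj (hheavyC i) (hheavyC j)
  · -- the heavy component of `j` lies away from `i`: then it is contained in the
    -- heavy component of `i`, and we can decrease the distance potential.
    have hCjbagi : ∀ w ∈ C j, w ∉ bag i := fun w hw hbi =>
      hcase ((hbranchj w hw i hbi).symm)
    have hvbj : vb j ∈ C j := mem_comp_self
    have hsub : C j ⊆ comp G (bag i) (vb j) := by
      intro w hw
      obtain ⟨pw⟩ := hw
      obtain ⟨qw, hqw⟩ := exists_walk_same_support pw
      refine reach_del_of_walk qw ?_
      intro x hx
      rw [hqw] at hx
      exact hCjbagi x (walk_support_mem_comp pw x hx)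
    have hvbj_nbi : vb j ∉ bag i := hCjbagi _ hvbj
    have hDheavy : S.ncard < 2 * (comp G (bag i) (vb j) ∩ S).ncard := by
      have h1 : (C j ∩ S) ⊆ (comp G (bag i) (vb j) ∩ S) :=
        Set.inter_subset_inter_left _ hsub
      have h2 := Set.ncard_le_ncard h1 (Set.toFinite _)
      have h3 := hheavyC j
      omega
    have hDC : comp G (bag i) (vb j) = C i := huniq i (vb j) hvbj_nbi hDheavy
    have hCji : C j ⊆ C i := hDC ▸ hsub
    obtain ⟨u', hu'⟩ := hCne j
    have hmge : m ≤ (C j ∩ S).ncard := hmin1 j u' hu'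
    have hSeq : C j ∩ S = C i ∩ S :=
      Set.eq_of_subset_of_ncard_le (Set.inter_subset_inter_left _ hCji)
        (by rw [hcardm]; exact hmge) (Set.toFinite _)
    have huj : u ∈ C j ∩ S := hSeq.symm ▸ (⟨huC, huS⟩ : u ∈ C i ∩ S)
    have hPj : P (j, u) := huj
    have hcardj : (C j ∩ S).ncard = m := by rw [hSeq, hcardm]
    have hdj : Dst j u ≤ T.dist j t := Nat.sInf_le ⟨t, hut, rfl⟩
    have hdjq := dist_le q
    have hfin := hmin2 j u hPj hcardj
    omega

end TWsep

open TWsep in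
theorem statement11 {V : Type} [Fintype V] (G : SimpleGraph V) (k : ℕ) (S : Set V)
    (h : TreewidthAtMost G k) :
    ∃ L X R : Set V,
      L ∪ X ∪ R = Set.univ ∧ Disjoint L X ∧ Disjoint L R ∧ Disjoint X R ∧
      X.ncard ≤ k + 1 ∧
      (∀ u ∈ L, ∀ v ∈ R, ¬ G.Adj u v) ∧
      3 * (L ∩ S).ncard ≤ 2 * S.ncard ∧
      3 * (R ∩ S).ncard ≤ 2 * S.ncard := by
  classical
  obtain ⟨ι, T, bag, hd, hbag⟩ := h
  by_cases hV : Nonempty V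
  · obtain ⟨v0⟩ := hV
    have hι : Nonempty ι := ⟨(hd.2.1 v0).choose⟩
    obtain ⟨i, hgood⟩ := exists_good_bag hι hd S
    set X := bag i with hX
    set Adm : Set V → Prop := fun L =>
      L ⊆ Xᶜ ∧ (∀ v ∈ L, comp G X v ⊆ L) ∧ 3 * (L ∩ S).ncard ≤ 2 * S.ncard with hAdm
    set A : Set ℕ := {n | ∃ L, Adm L ∧ (L ∩ S).ncard = n} with hA
    have hA0 : (0 : ℕ) ∈ A := ⟨∅, ⟨Set.empty_subset _, by simp, by simp⟩, by simp⟩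
    have hAbdd : BddAbove A := by
      refine ⟨S.ncard, ?_⟩
      rintro n ⟨L, _, hn⟩
      exact hn ▸ Set.ncard_le_ncard Set.inter_subset_right (Set.toFinite S)
    obtain ⟨L, hL, hLcard⟩ := Nat.sSup_mem ⟨0, hA0⟩ hAbdd
    have hmax : ∀ L', Adm L' → (L' ∩ S).ncard ≤ (L ∩ S).ncard := fun L' h' =>
      hLcard ▸ le_csSup hAbdd ⟨L', h', rfl⟩
    refine ⟨L, X, Xᶜ \ L, ?_, ?_, ?_, ?_, ?_, ?_, ?_, ?_⟩
    · ext v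
      simp only [Set.mem_union, Set.mem_diff, Set.mem_compl_iff, Set.mem_univ, iff_true]
      by_cases hvX : v ∈ X
      · tauto
      · by_cases hvL : v ∈ L <;> tauto
    · rw [Set.disjoint_left]
      intro v hv hvX
      exact hL.1 hv hvX
    · rw [Set.disjoint_left]
      intro v hv hv2
      exact hv2.2 hv
    · rw [Set.disjoint_left]
      intro v hv hv2
      exact hv2.1 hv
    · exact hbag i
    · intro u hu v hv hadj
      have huX : u ∉ X := hL.1 hu
      have hvL : v ∈ comp G X u := Adj.reachable ⟨hadj, huX, hv.1⟩
      exact hv.2 (hL.2.1 u hu hvL)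
    · exact hL.2.2
    · by_contra hR
      push_neg at hR
      obtain ⟨v, hv⟩ : ((Xᶜ \ L) ∩ S).Nonempty :=
        Set.nonempty_of_ncard_ne_zero (by omega)
      have hvX : v ∉ X := hv.1.1
      have hvL : v ∉ L := hv.1.2
      have hvS : v ∈ S := hv.2
      set Cv := comp G X v with hCv
      have hCAdm : Adm Cv := by
        refine ⟨comp_subset_compl hvX, ?_, ?_⟩
        · intro w hw
          rw [comp_eq_of_mem hw]
        · have h2 : 2 * (Cv ∩ S).ncard ≤ S.ncard := hgood v hvX
          omega
      have hCL : (Cv ∩ S).ncard ≤ (L ∩ S).ncard := hmax Cv hCAdm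
      have hLCdisj : Disjoint L Cv := by
        rw [Set.disjoint_left]
        intro w hwL hwC
        have hsubL : Cv ⊆ L := by
          rw [hCv, ← comp_eq_of_mem hwC]
          exact hL.2.1 w hwL
        exact hvL (hsubL mem_comp_self)
      have hvC : v ∈ Cv ∩ S := ⟨mem_comp_self, hvS⟩
      have hCpos : 1 ≤ (Cv ∩ S).ncard :=
        (Set.ncard_pos (Set.toFinite _)).mpr ⟨v, hvC⟩
      have hnotAdm : ¬ Adm (L ∪ Cv) := by
        intro hAdm'
        have h1 := hmax _ hAdm'
        rw [Set.union_inter_distrib_right,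
          Set.ncard_union_eq (hLCdisj.mono Set.inter_subset_left Set.inter_subset_left)
            (Set.toFinite _) (Set.toFinite _)] at h1
        omega
      have hbig : 2 * S.ncard < 3 * ((L ∩ S).ncard + (Cv ∩ S).ncard) := by
        by_contra hle
        push_neg at hle
        refine hnotAdm ⟨Set.union_subset hL.1 (comp_subset_compl hvX), ?_, ?_⟩
        · intro w hw
          rcases hw with hw | hw
          · exact (hL.2.1 w hw).trans Set.subset_union_left
          · rw [comp_eq_of_mem hw]
            exact Set.subset_union_right
        · rw [Set.union_inter_distrib_right,
            Set.ncard_union_eq (hLCdisj.mono Set.inter_subset_left Set.inter_subset_left)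
              (Set.toFinite _) (Set.toFinite _)]
          exact hle
      have hLRS : (L ∩ S).ncard + ((Xᶜ \ L) ∩ S).ncard ≤ S.ncard := by
        have hdisj : Disjoint (L ∩ S) ((Xᶜ \ L) ∩ S) := by
          rw [Set.disjoint_left]
          rintro w ⟨hwL, _⟩ ⟨⟨_, hwL'⟩, _⟩
          exact hwL' hwL
        have hsub : (L ∩ S) ∪ ((Xᶜ \ L) ∩ S) ⊆ S :=
          Set.union_subset Set.inter_subset_right Set.inter_subset_right
        have := Set.ncard_le_ncard hsub (Set.toFinite S)
        rwa [Set.ncard_union_eq hdisj (Set.toFinite _) (Set.toFinite _)] at this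
      omega
  · refine ⟨∅, ∅, ∅, ?_, ?_, ?_, ?_, ?_, ?_, ?_, ?_⟩ <;>
      simp [Set.univ_eq_empty_iff.mpr (not_nonempty_iff.mp hV)]
end

section
/- Let G be a finite graph of treewidth at most k. Then G has a (2/3)-balanced separation of order at most k+1; that is, there exists a partition (L, X, R) of V(G) with no edge of G between L and R, |X| ≤ k+1, and |L|, |R| ≤ (2/3)|V(G)|. -/
open SimpleGraph

section Aux
variable {ι : Type} {T : SimpleGraph ι}

/-- `a` and `b` are connected in `T` by a walk avoiding `t`. -/
def ReachAvoid (T : SimpleGraph ι) (t a b : ι) : Prop := ∃ p : T.Walk a b, t ∉ p.support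

lemma ReachAvoid.refl {t a : ι} (h : a ≠ t) : ReachAvoid T t a a :=
  ⟨SimpleGraph.Walk.nil, by simp [h.symm]⟩

lemma ReachAvoid.symm {t a b : ι} : ReachAvoid T t a b → ReachAvoid T t b a := by
  rintro ⟨p, hp⟩
  exact ⟨p.reverse, by simpa [SimpleGraph.Walk.support_reverse] using hp⟩

lemma ReachAvoid.trans {t a b c : ι} :
    ReachAvoid T t a b → ReachAvoid T t b c → ReachAvoid T t a c := by
  rintro ⟨p, hp⟩ ⟨q, hq⟩
  refine ⟨p.append q, fun hm => ?_⟩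
  rcases (SimpleGraph.Walk.mem_support_append_iff _ _).1 hm with h | h
  exacts [hp h, hq h]

lemma ReachAvoid.ne {t a b : ι} (h : ReachAvoid T t a b) : a ≠ t := by
  rintro rfl; obtain ⟨p, hp⟩ := h; exact hp p.start_mem_support

/-- In a tree, any path realizes the distance. -/
lemma tree_dist_eq {a b : ι} (hT : T.IsTree) (p : T.Walk a b) (hp : p.IsPath) :
    T.dist a b = p.length := by
  classical
  obtain ⟨q, hq⟩ := (hT.isConnected a b).exists_walk_length_eq_dist
  have hq' : q.bypass = p := (hT.existsUnique_path a b).unique q.bypass_isPath hp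
  have := q.length_bypass_le
  rw [hq'] at this
  exact le_antisymm (SimpleGraph.dist_le p) (hq ▸ this)

/-- Across an edge `t ~ t'` of a tree, vertices reachable from `t'` avoiding `t`
are one step closer to `t'`. -/
lemma tree_dist_succ {t t' x : ι} (hT : T.IsTree) (ha : T.Adj t t')
    (hr : ReachAvoid T t t' x) : T.dist t x = T.dist t' x + 1 := by
  classical
  obtain ⟨w, hw⟩ := hr
  have hp : w.bypass.IsPath := w.bypass_isPath
  have ht : t ∉ w.bypass.support := fun hm => hw (w.support_bypass_subset hm)
  have hcons : (SimpleGraph.Walk.cons ha w.bypass).IsPath :=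
    (SimpleGraph.Walk.cons_isPath_iff _ _).2 ⟨hp, ht⟩
  rw [tree_dist_eq hT _ hcons, tree_dist_eq hT _ hp, SimpleGraph.Walk.length_cons, add_comm]

end Aux

/-- Splitting lemma: a family of weights each at most `n/2` with total at most `n`
can be split into two groups each of total at most `2n/3`. -/
lemma split_lemma {α : Type} [DecidableEq α] (n : ℕ) (D : Finset α) (w : α → ℕ)
    (hw : ∀ d ∈ D, 2 * w d ≤ n) (htot : ∑ d ∈ D, w d ≤ n) :
    ∃ S ⊆ D, 3 * (∑ d ∈ S, w d) ≤ 2 * n ∧ 3 * (∑ d ∈ D \ S, w d) ≤ 2 * n := by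
  classical
  set P : Finset (Finset α) := D.powerset.filter (fun S => 3 * (∑ d ∈ S, w d) ≤ 2 * n) with hP
  have hne : P.Nonempty := ⟨∅, by simp [hP]⟩
  obtain ⟨S, hSP, hmax⟩ := P.exists_max_image (fun S => ∑ d ∈ S, w d) hne
  rw [hP, Finset.mem_filter, Finset.mem_powerset] at hSP
  obtain ⟨hSD, hSle⟩ := hSP
  refine ⟨S, hSD, hSle, ?_⟩
  by_contra hR
  push_neg at hR
  set c := ∑ d ∈ D \ S, w d with hc
  set s := ∑ d ∈ S, w d with hs
  have hsum : c + s = ∑ d ∈ D, w d := Finset.sum_sdiff hSD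
  have hsn : 3 * s < n := by omega
  have hkey : ∀ a ∈ D \ S, 1 ≤ w a → 2 * n < 3 * (w a + s) := by
    intro a ha hwa
    by_contra hle
    push_neg at hle
    have haS : a ∉ S := (Finset.mem_sdiff.1 ha).2
    have haD : a ∈ D := (Finset.mem_sdiff.1 ha).1
    have hins : insert a S ∈ P := by
      rw [hP, Finset.mem_filter, Finset.mem_powerset]
      refine ⟨Finset.insert_subset haD hSD, ?_⟩
      rwa [Finset.sum_insert haS]
    have := hmax _ hins
    rw [Finset.sum_insert haS] at this
    omega
  have hc1 : 1 ≤ c := by omega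
  obtain ⟨a, ha, hwa⟩ : ∃ a ∈ D \ S, 1 ≤ w a := by
    by_contra hno
    push_neg at hno
    have : c = 0 := Finset.sum_eq_zero (fun d hd => by have := hno d hd; omega)
    omega
  have ha2 : 2 * w a ≤ n := hw a (Finset.mem_sdiff.1 ha).1
  have hrest : 1 ≤ ∑ d ∈ (D \ S).erase a, w d := by
    have : w a + ∑ d ∈ (D \ S).erase a, w d = c := Finset.add_sum_erase _ _ ha
    omega
  obtain ⟨b, hb, hwb⟩ : ∃ b ∈ (D \ S).erase a, 1 ≤ w b := by
    by_contra hno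
    push_neg at hno
    have : ∑ d ∈ (D \ S).erase a, w d = 0 :=
      Finset.sum_eq_zero (fun d hd => by have := hno d hd; omega)
    omega
  have hbDS : b ∈ D \ S := Finset.mem_of_mem_erase hb
  have hab : w a + w b ≤ c := by
    have h1 : w a + ∑ d ∈ (D \ S).erase a, w d = c := Finset.add_sum_erase _ _ ha
    have h2 : w b ≤ ∑ d ∈ (D \ S).erase a, w d :=
      Finset.single_le_sum (fun _ _ => Nat.zero_le _) hb
    omega
  have hka := hkey a ha hwa
  have hkb := hkey b hbDS hwb
  omega

section Classes
variable {V : Type} [Fintype V] {ι : Type}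

open Classical in
/-- The class of `v` : vertices outside `bag t` whose representative node is connected
to that of `v` avoiding `t`. -/
noncomputable def cls (T : SimpleGraph ι) (bag : ι → Set V) (iv : V → ι) (t : ι) (v : V) :
    Finset V :=
  Finset.univ.filter (fun u => u ∉ bag t ∧ ReachAvoid T t (iv v) (iv u))

lemma mem_cls {T : SimpleGraph ι} {bag : ι → Set V} {iv : V → ι} {t : ι} {v u : V} :
    u ∈ cls T bag iv t v ↔ u ∉ bag t ∧ ReachAvoid T t (iv v) (iv u) := by
  simp [cls]

/-- `t` is a good (centroid) node: every class has at most half the vertices. -/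
def Good (T : SimpleGraph ι) (bag : ι → Set V) (iv : V → ι) (t : ι) : Prop :=
  ∀ v : V, v ∉ bag t → 2 * (cls T bag iv t v).card ≤ Fintype.card V

/-- Potential function: total distance from `t` to the representative nodes. -/
noncomputable def phi (T : SimpleGraph ι) (iv : V → ι) (t : ι) : ℕ :=
  ∑ v : V, T.dist t (iv v)

end Classes
section Descent
variable {V : Type} [Fintype V] {ι : Type}

lemma descent {T : SimpleGraph ι} {bag : ι → Set V} {iv : V → ι}
    (hT : T.IsTree) (hiv : ∀ v, v ∈ bag (iv v)) {t : ι}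
    (hbad : ¬ Good T bag iv t) :
    ∃ t', phi T iv t' < phi T iv t := by
  classical
  rw [Good] at hbad
  push_neg at hbad
  obtain ⟨v0, hv0, hbig⟩ := hbad
  set A := cls T bag iv t v0 with hA
  have hne : iv v0 ≠ t := fun he => hv0 (he ▸ hiv v0)
  obtain ⟨w⟩ := hT.isConnected t (iv v0)
  have hp : w.bypass.IsPath := w.bypass_isPath
  set p := w.bypass with hpdef
  clear_value p
  cases p with
  | nil => exact absurd rfl hne
  | @cons _ t' _ ha q =>
    rw [SimpleGraph.Walk.cons_isPath_iff] at hp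
    have hq : ReachAvoid T t t' (iv v0) := ⟨q, hp.2⟩
    -- every member of the class is one step closer to t'
    have hstep : ∀ u ∈ A, T.dist t (iv u) = T.dist t' (iv u) + 1 := by
      intro u hu
      have hru : ReachAvoid T t (iv v0) (iv u) := (mem_cls.1 hu).2
      exact tree_dist_succ hT ha (hq.trans hru)
    have htri : ∀ x : ι, T.dist t' x ≤ T.dist t x + 1 := by
      intro x
      have h1 : T.dist t' t = 1 := SimpleGraph.dist_eq_one_iff_adj.2 ha.symm
      have := hT.isConnected.dist_triangle (u := t') (v := t) (w := x)
      omega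
    refine ⟨t', ?_⟩
    have h1 : ∑ v ∈ A, T.dist t' (iv v) + A.card = ∑ v ∈ A, T.dist t (iv v) := by
      rw [Finset.card_eq_sum_ones, ← Finset.sum_add_distrib]
      exact Finset.sum_congr rfl (fun u hu => (hstep u hu).symm)
    have h2 : ∑ v ∈ Aᶜ, T.dist t' (iv v) ≤ ∑ v ∈ Aᶜ, T.dist t (iv v) + Aᶜ.card := by
      rw [Finset.card_eq_sum_ones, ← Finset.sum_add_distrib]
      exact Finset.sum_le_sum (fun v _ => htri (iv v))
    have h3 : ∑ v ∈ A, T.dist t' (iv v) + ∑ v ∈ Aᶜ, T.dist t' (iv v) = phi T iv t' :=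
      Finset.sum_add_sum_compl A _
    have h4 : ∑ v ∈ A, T.dist t (iv v) + ∑ v ∈ Aᶜ, T.dist t (iv v) = phi T iv t :=
      Finset.sum_add_sum_compl A _
    have h5 : A.card + Aᶜ.card = Fintype.card V := Finset.card_add_card_compl A
    omega

lemma exists_good {T : SimpleGraph ι} {bag : ι → Set V} {iv : V → ι}
    (hT : T.IsTree) (hiv : ∀ v, v ∈ bag (iv v)) :
    ∃ t, Good T bag iv t := by
  by_contra hno
  push_neg at hno
  obtain ⟨t0⟩ := hT.isConnected.nonempty
  have key : ∀ m : ℕ, ∀ t : ι, phi T iv t ≤ m → False := by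
    intro m
    induction m with
    | zero =>
      intro t h
      obtain ⟨t', h'⟩ := descent hT hiv (hno t)
      omega
    | succ m ih =>
      intro t h
      obtain ⟨t', h'⟩ := descent hT hiv (hno t)
      exact ih t' (by omega)
  exact key _ t0 le_rfl
end Descent
section Bagset
variable {V : Type} {ι : Type}

lemma reach_in_bagset {T : SimpleGraph ι} {bag : ι → Set V} {v : V} {a b t : ι}
    (hconn : (T.induce {i | v ∈ bag i}).Connected)
    (ha : v ∈ bag a) (hb : v ∈ bag b) (ht : v ∉ bag t) :
    ReachAvoid T t a b := by
  obtain ⟨W⟩ := hconn ⟨a, ha⟩ ⟨b, hb⟩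
  refine ⟨W.map (SimpleGraph.Embedding.induce {i | v ∈ bag i}).toHom, fun hm => ?_⟩
  replace hm : t ∈ (W.map (SimpleGraph.Embedding.induce {i | v ∈ bag i}).toHom).support := hm
  rw [SimpleGraph.Walk.support_map, List.mem_map] at hm
  obtain ⟨y, _, hy⟩ := hm
  have : v ∈ bag t := by
    have := y.2
    simp only [Set.mem_setOf_eq] at this
    rwa [show (y : ι) = t from hy] at this
  exact ht this
end Bagset
theorem statement12 {V : Type} [Fintype V] (G : SimpleGraph V) (k : ℕ)
    (h : TreewidthAtMost G k) :
    ∃ L X R : Set V,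
      L ∪ X ∪ R = Set.univ ∧ Disjoint L X ∧ Disjoint L R ∧ Disjoint X R ∧
      (∀ u ∈ L, ∀ v ∈ R, ¬ G.Adj u v) ∧
      X.ncard ≤ k + 1 ∧
      3 * L.ncard ≤ 2 * Fintype.card V ∧
      3 * R.ncard ≤ 2 * Fintype.card V := by
  classical
  obtain ⟨ι, T, bag, ⟨hTree, hcover, hedge, hconn⟩, hsize⟩ := h
  choose iv hiv using hcover
  obtain ⟨t, hgood⟩ := exists_good hTree hiv
  set n := Fintype.card V with hn
  -- basic facts about classes
  have hmem_self : ∀ v : V, v ∉ bag t → v ∈ cls T bag iv t v := by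
    intro v hv
    exact mem_cls.2 ⟨hv, ReachAvoid.refl (fun he => hv (he ▸ hiv v))⟩
  have hcls_eq : ∀ v u : V, u ∈ cls T bag iv t v → cls T bag iv t u = cls T bag iv t v := by
    intro v u hu
    obtain ⟨hu1, hu2⟩ := mem_cls.1 hu
    ext x
    simp only [mem_cls]
    exact ⟨fun ⟨hx1, hx2⟩ => ⟨hx1, hu2.trans hx2⟩, fun ⟨hx1, hx2⟩ => ⟨hx1, hu2.symm.trans hx2⟩⟩
  set D : Finset (Finset V) :=
    (Finset.univ.filter (fun v => v ∉ bag t)).image (cls T bag iv t) with hD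
  have hD_cls : ∀ d ∈ D, ∀ u ∈ d, d = cls T bag iv t u := by
    intro d hd u hu
    obtain ⟨v, _, rfl⟩ := Finset.mem_image.1 hd
    exact (hcls_eq v u hu).symm
  have hD_notbag : ∀ d ∈ D, ∀ u ∈ d, u ∉ bag t := by
    intro d hd u hu
    obtain ⟨v, _, rfl⟩ := Finset.mem_image.1 hd
    exact (mem_cls.1 hu).1
  have hdisj : ∀ x ∈ D, ∀ y ∈ D, x ≠ y → Disjoint x y := by
    intro x hx y hy hxy
    rw [Finset.disjoint_left]
    intro u hux huy
    exact hxy ((hD_cls x hx u hux).trans (hD_cls y hy u huy).symm)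
  have hbiU : D.biUnion id = Finset.univ.filter (fun v => v ∉ bag t) := by
    ext u
    simp only [Finset.mem_biUnion, id, Finset.mem_filter, Finset.mem_univ, true_and]
    constructor
    · rintro ⟨d, hd, hu⟩; exact hD_notbag d hd u hu
    · intro hu
      exact ⟨cls T bag iv t u, Finset.mem_image.2 ⟨u, by simp [hu], rfl⟩, hmem_self u hu⟩
  have htot : ∑ d ∈ D, d.card ≤ n := by
    have hcb : (D.biUnion id).card = ∑ d ∈ D, d.card := Finset.card_biUnion hdisj
    rw [hbiU] at hcb
    rw [← hcb]
    exact le_trans (Finset.card_filter_le _ _) (by simp [hn])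
  have hweights : ∀ d ∈ D, 2 * d.card ≤ n := by
    intro d hd
    obtain ⟨v, hv, rfl⟩ := Finset.mem_image.1 hd
    exact hgood v (by simpa using hv)
  obtain ⟨S, hSD, hSle, hRle⟩ := split_lemma n D Finset.card hweights htot
  set LF := S.biUnion id with hLF
  set RF := (D \ S).biUnion id with hRF
  -- class membership facts for LF, RF
  have hmemLF : ∀ u : V, u ∈ LF → u ∉ bag t ∧ cls T bag iv t u ∈ S := by
    intro u hu
    obtain ⟨d, hd, hud⟩ := Finset.mem_biUnion.1 hu
    have hdD := hSD hd
    have := hD_cls d hdD u hud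
    exact ⟨hD_notbag d hdD u hud, this ▸ hd⟩
  have hmemRF : ∀ u : V, u ∈ RF → u ∉ bag t ∧ cls T bag iv t u ∈ D \ S := by
    intro u hu
    obtain ⟨d, hd, hud⟩ := Finset.mem_biUnion.1 hu
    have hdD := (Finset.mem_sdiff.1 hd).1
    have := hD_cls d hdD u hud
    exact ⟨hD_notbag d hdD u hud, this ▸ hd⟩
  refine ⟨↑LF, bag t, ↑RF, ?_, ?_, ?_, ?_, ?_, ?_, ?_, ?_⟩
  · -- union is everything
    ext v
    simp only [Set.mem_union, Set.mem_univ, iff_true, Finset.coe_sort_coe, Finset.mem_coe]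
    by_cases hv : v ∈ bag t
    · exact Or.inl (Or.inr hv)
    · have hclsD : cls T bag iv t v ∈ D := Finset.mem_image.2 ⟨v, by simp [hv], rfl⟩
      by_cases hvS : cls T bag iv t v ∈ S
      · exact Or.inl (Or.inl (Finset.mem_biUnion.2 ⟨_, hvS, hmem_self v hv⟩))
      · exact Or.inr (Finset.mem_biUnion.2 ⟨_, Finset.mem_sdiff.2 ⟨hclsD, hvS⟩, hmem_self v hv⟩)
  · -- L disjoint X
    rw [Set.disjoint_left]
    intro u hu
    exact (hmemLF u hu).1
  · -- L disjoint R
    rw [Set.disjoint_left]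
    intro u hu hu'
    have h1 := (hmemLF u hu).2
    have h2 := (Finset.mem_sdiff.1 (hmemRF u hu').2).2
    exact h2 h1
  · -- X disjoint R
    rw [Set.disjoint_right]
    intro u hu
    exact (hmemRF u hu).1
  · -- no edges between L and R
    intro u hu v hv hadj
    obtain ⟨hub, huS⟩ := hmemLF u hu
    obtain ⟨hvb, hvS⟩ := hmemRF v hv
    obtain ⟨i, hui, hvi⟩ := hedge u v hadj
    have hit : i ≠ t := fun he => hub (he ▸ hui)
    have r1 : ReachAvoid T t (iv u) i := reach_in_bagset (hconn u) (hiv u) hui hub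
    have r2 : ReachAvoid T t i (iv v) := (reach_in_bagset (hconn v) (hiv v) hvi hvb).symm
    have hvm : v ∈ cls T bag iv t u := mem_cls.2 ⟨hvb, r1.trans r2⟩
    have : cls T bag iv t v = cls T bag iv t u := hcls_eq u v hvm
    rw [this] at hvS
    exact (Finset.mem_sdiff.1 hvS).2 huS
  · -- bag size
    exact hsize t
  · -- L small
    have hcb : LF.card = ∑ d ∈ S, d.card :=
      Finset.card_biUnion (fun x hx y hy hxy => hdisj x (hSD hx) y (hSD hy) hxy)
    rw [Set.ncard_coe_finset, hcb]
    simpa using hSle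
  · -- R small
    have hcb : RF.card = ∑ d ∈ D \ S, d.card :=
      Finset.card_biUnion (fun x hx y hy hxy =>
        hdisj x (Finset.mem_sdiff.1 hx).1 y (Finset.mem_sdiff.1 hy).1 hxy)
    rw [Set.ncard_coe_finset, hcb]
    simpa using hRle
end

section
/- Let G be a finite graph of treewidth at most k and let (A_1, B, A_2) be a partition of V(G) with no edge of G between A_1 and A_2, |A_1|, |A_2| ≤ (3/4)|V(G)|, and |B| ≤ t+1, and suppose |V(G)| ≥ 36(k + t + 2). Then there exists a partition (L, X, R) of V(G) with no edge of G between L and R, |X| ≤ k+1, and |L|, |R| ≤ (8/9)|V(G)|. -/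
open SimpleGraph

section ReachAPI
variable {V : Type} (G : SimpleGraph V)

def Reach (X : Set V) (w : V) : Set V :=
  {v | ∃ p : G.Walk w v, ∀ x ∈ p.support, x ∉ X}

variable {G} {X : Set V} {u v w : V}

lemma reach_self (h : w ∉ X) : w ∈ Reach G X w :=
  ⟨Walk.nil, by simp [h]⟩

lemma reach_disj (h : v ∈ Reach G X w) : v ∉ X := by
  obtain ⟨p, hp⟩ := h
  exact hp v p.end_mem_support

lemma reach_trans (h1 : v ∈ Reach G X w) (h2 : u ∈ Reach G X v) : u ∈ Reach G X w := by
  obtain ⟨p, hp⟩ := h1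
  obtain ⟨q, hq⟩ := h2
  exact ⟨p.append q, by
    intro x hx
    rcases (Walk.mem_support_append_iff _ _).1 hx with h | h
    · exact hp x h
    · exact hq x h⟩

lemma reach_symm (h : v ∈ Reach G X w) : w ∈ Reach G X v := by
  obtain ⟨p, hp⟩ := h
  exact ⟨p.reverse, by simpa using hp⟩

lemma reach_adj (h : u ∈ Reach G X w) (ha : G.Adj u v) (hv : v ∉ X) : v ∈ Reach G X w :=
  reach_trans h ⟨Walk.cons ha Walk.nil, by
    intro x hx
    simp only [Walk.support_cons, Walk.support_nil, List.mem_cons, List.mem_singleton] at hx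
    rcases hx with rfl | rfl | h'
    · exact reach_disj h
    · exact hv
    · exact absurd h' List.not_mem_nil⟩

lemma reach_eq (h : v ∈ Reach G X w) : Reach G X v = Reach G X w := by
  ext u
  exact ⟨fun hu => reach_trans h hu, fun hu => reach_trans (reach_symm h) hu⟩

lemma reach_support (p : G.Walk w v) (hp : ∀ x ∈ p.support, x ∉ X) :
    ∀ x ∈ p.support, x ∈ Reach G X w := by
  induction p with
  | nil => intro x hx; simp at hx; subst hx; exact reach_self (hp _ (by simp))
  | @cons a b c ha q ih =>
    intro x hx
    simp only [Walk.support_cons, List.mem_cons] at hx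
    have haR : a ∈ Reach G X a := reach_self (hp a (by simp))
    have hbR : b ∈ Reach G X a := reach_adj haR ha (hp b (by simp))
    rcases hx with rfl | hx
    · exact haR
    · exact reach_trans hbR (ih (fun y hy => hp y (by simp [hy])) x hx)

end ReachAPI

/-- walk inside a connected induced subgraph -/
lemma induce_walk {ι : Type} {T : SimpleGraph ι} {S : Set ι}
    (hconn : (T.induce S).Connected) {j j' : ι} (hj : j ∈ S) (hj' : j' ∈ S) :
    ∃ p : T.Walk j j', ∀ x ∈ p.support, x ∈ S := by
  obtain ⟨q⟩ := hconn.preconnected ⟨j, hj⟩ ⟨j', hj'⟩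
  refine ⟨q.map (Embedding.induce S).toHom, ?_⟩
  intro x hx
  have hx' : x ∈ (q.map (Embedding.induce S).toHom).support := hx
  rw [Walk.support_map, List.mem_map] at hx'
  obtain ⟨y, _, rfl⟩ := hx'
  exact y.2

theorem separator {V : Type} [Fintype V] (G : SimpleGraph V) (k : ℕ)
    (htw : TreewidthAtMost G k) :
    ∃ X : Set V, X.ncard ≤ k + 1 ∧
      ∀ w, w ∉ X → 2 * (Reach G X w).ncard ≤ Fintype.card V := by
  classical
  obtain ⟨ι, T, bag, ⟨htree, hcov, hedgecov, hcoh⟩, hsize⟩ := htw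
  set n := Fintype.card V with hn
  by_contra hcon
  push_neg at hcon
  choose w hw1 hw2 using fun i => hcon (bag i) (hsize i)
  choose nd hnd using hcov
  set C : ι → Set V := fun i => Reach G (bag i) (w i) with hC
  set K : ι → Set ι := fun i => Reach T {i} (nd (w i)) with hK
  have hwC : ∀ i, w i ∈ C i := fun i => reach_self (hw1 i)
  have hCn : ∀ i, (C i).ncard ≤ n := fun i => by
    rw [hn, ← Nat.card_eq_fintype_card, ← Set.ncard_univ]
    exact Set.ncard_le_ncard (Set.subset_univ _) (Set.toFinite _)
  -- SUB : within a bag-subtree we can move while avoiding i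
  have SUB : ∀ (i : ι) (v : V), v ∉ bag i → ∀ j j', v ∈ bag j → v ∈ bag j' →
      j' ∈ Reach T {i} j := by
    intro i v hvi j j' hj hj'
    obtain ⟨p, hp⟩ := induce_walk (hcoh v) hj hj'
    refine ⟨p, fun x hx hxi => hvi ?_⟩
    have := hp x hx
    rw [Set.mem_singleton_iff] at hxi
    subst hxi
    exact this
  -- F1 : all bags containing vertices of C i lie in K i
  have F1 : ∀ i, ∀ v ∈ C i, ∀ j, v ∈ bag j → j ∈ K i := by
    intro i v hv
    have aux : ∀ (a b : V) (p : G.Walk a b), (∀ x ∈ p.support, x ∉ bag i) →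
        (∀ j, a ∈ bag j → j ∈ K i) → ∀ j, b ∈ bag j → j ∈ K i := by
      intro a b p
      induction p with
      | nil => exact fun _ h => h
      | @cons a b c ha q ih =>
        intro hp base
        obtain ⟨j0, hja, hjb⟩ := hedgecov a b ha
        have hj0K : j0 ∈ K i := base j0 hja
        have hbnot : b ∉ bag i := hp b (by simp)
        have base' : ∀ j, b ∈ bag j → j ∈ K i := fun j hj =>
          reach_trans hj0K (SUB i b hbnot j0 j hjb hj)
        exact ih (fun x hx => hp x (by simp [hx])) base'
    obtain ⟨p, hp⟩ := hv
    exact aux (w i) v p hp (fun j hj => SUB i (w i) (hw1 i) (nd (w i)) j (hnd (w i)) hj)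
  have hKself : ∀ i, i ∉ K i := fun i hi => reach_disj hi rfl
  have hndne : ∀ i, nd (w i) ≠ i := by
    intro i h
    have := hnd (w i)
    rw [h] at this
    exact hw1 i this
  have hndK : ∀ i, nd (w i) ∈ K i := fun i =>
    reach_self (by simpa using hndne i)
  -- F2 : unique neighbour of i inside K i
  have F2 : ∀ i, ∃ i', T.Adj i i' ∧ i' ∈ K i ∧
      ∀ x, T.Adj i x → x ∈ K i → x = i' := by
    intro i
    obtain ⟨p0⟩ := htree.isConnected.preconnected i (nd (w i))
    obtain ⟨i', ha, q, hq⟩ := Walk.exists_eq_cons_of_ne (Ne.symm (hndne i)) p0.bypass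
    have hip : p0.bypass.IsPath := p0.bypass_isPath
    rw [hq, Walk.cons_isPath_iff] at hip
    have hi'K : i' ∈ K i := by
      refine ⟨q.reverse, ?_⟩
      intro x hx hmem
      rw [Set.mem_singleton_iff] at hmem
      subst hmem
      rw [Walk.support_reverse] at hx
      exact hip.2 (List.mem_reverse.mp hx)
    refine ⟨i', ha, hi'K, ?_⟩
    intro x hax hxK
    by_contra hne
    -- build two distinct paths from i to x
    obtain ⟨r0, hr0⟩ : x ∈ Reach T {i} i' := by
      rw [reach_eq hi'K]; exact hxK
    have hrp : r0.bypass.IsPath := r0.bypass_isPath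
    have hri : i ∉ r0.bypass.support := by
      intro hmem
      exact hr0 i (Walk.support_bypass_subset _ hmem) rfl
    have hpa : (Walk.cons hax Walk.nil : T.Walk i x).IsPath := by
      rw [Walk.cons_isPath_iff]
      refine ⟨Walk.IsPath.nil, ?_⟩
      simp only [Walk.support_nil, List.mem_singleton]
      intro h
      exact hKself i (h ▸ hxK)
    have hpb2 : (Walk.cons ha r0.bypass : T.Walk i x).IsPath := by
      rw [Walk.cons_isPath_iff]
      exact ⟨hrp, hri⟩
    have huniq := htree.existsUnique_path i x
    obtain ⟨pp, -, hup⟩ := huniq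
    have h3 := (hup _ hpa).trans (hup _ hpb2).symm
    have h4 := congrArg Walk.support h3
    rw [Walk.support_cons, Walk.support_cons, r0.bypass.support_eq_cons] at h4
    simp only [Walk.support_nil, List.cons.injEq] at h4
    exact hne h4.2.1
  choose nb hnb1 hnb2 hnb3 using F2
  -- F3 : distance to K i decreases through nb i
  have F3 : ∀ i, ∀ j ∈ K i, T.dist (nb i) j < T.dist i j := by
    intro i j hj
    have hij : i ≠ j := fun h => hKself i (h ▸ hj)
    have hreach : T.Reachable i j := htree.isConnected.preconnected i j
    obtain ⟨p, hp⟩ := hreach.exists_walk_length_eq_dist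
    have hlb : p.bypass.length = T.dist i j :=
      le_antisymm (hp ▸ p.length_bypass_le) (dist_le p.bypass)
    obtain ⟨x, hx, r, hr⟩ := Walk.exists_eq_cons_of_ne hij p.bypass
    have hbp : p.bypass.IsPath := p.bypass_isPath
    rw [hr, Walk.cons_isPath_iff] at hbp
    have hxK : x ∈ K i := by
      have hx2 : x ∈ Reach T {i} j := by
        refine ⟨r.reverse, ?_⟩
        intro y hy hmem
        rw [Set.mem_singleton_iff] at hmem
        subst hmem
        rw [Walk.support_reverse] at hy
        exact hbp.2 (List.mem_reverse.mp hy)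
      rw [reach_eq hj] at hx2
      exact hx2
    have hxnb : x = nb i := hnb3 i x hx hxK
    have hdle : T.dist (nb i) j ≤ r.length := hxnb ▸ dist_le r
    have hlen : r.length + 1 = T.dist i j := by
      rw [← hlb, hr, Walk.length_cons]
    omega
  -- the target set of bags and the distance potential
  set J : ι → Set ι := fun i => {j | ∃ v ∈ C i, v ∈ bag j} with hJ
  set d : ι → ℕ := fun i => sInf (T.dist i '' J i) with hd
  have hJne : ∀ i, (T.dist i '' J i).Nonempty :=
    fun i => ⟨T.dist i (nd (w i)), nd (w i), ⟨w i, hwC i, hnd (w i)⟩, rfl⟩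
  have hJK : ∀ i, J i ⊆ K i := by
    rintro i j ⟨v, hv, hvb⟩
    exact F1 i v hv j hvb
  have hdmem : ∀ i, ∃ j ∈ J i, T.dist i j = d i := by
    intro i
    have := Nat.sInf_mem (hJne i)
    obtain ⟨j, hj, hval⟩ := this
    exact ⟨j, hj, hval⟩
  have hd1 : ∀ i, 1 ≤ d i := by
    intro i
    obtain ⟨j, hj, hval⟩ := hdmem i
    have hij : i ≠ j := fun h => hKself i (h ▸ hJK i hj)
    have := htree.isConnected.pos_dist_of_ne hij
    omega
  -- the step: C shrinks, and if C stays the same then d strictly drops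
  have STEP : ∀ i, C (nb i) ⊆ C i := by
    intro i
    set i' := nb i with hi'
    -- a common vertex of the two big components
    have hzex : (C i ∩ C i').Nonempty := by
      apply Set.nonempty_of_ncard_ne_zero
      have h1 := Set.ncard_union_add_ncard_inter (C i) (C i') (Set.toFinite _) (Set.toFinite _)
      have h2 : (C i ∪ C i').ncard ≤ n := by
        rw [hn, ← Nat.card_eq_fintype_card, ← Set.ncard_univ]
        exact Set.ncard_le_ncard (Set.subset_univ _) (Set.toFinite _)
      have h3 : n < 2 * (C i).ncard := hw2 i
      have h4 : n < 2 * (C i').ncard := hw2 i'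
      omega
    obtain ⟨z, hzi, hzi'⟩ := hzex
    -- F4 : i is not in K i'
    have F4 : i ∉ K i' := by
      intro hiK
      have hjzKi : nd z ∈ K i := F1 i z hzi (nd z) (hnd z)
      have hjzKi' : nd z ∈ K i' := F1 i' z hzi' (nd z) (hnd z)
      have hiR : i ∈ Reach T {i'} (nd z) := by rw [reach_eq hjzKi']; exact hiK
      obtain ⟨p0, hp0⟩ := hiR
      have hPp : p0.bypass.IsPath := p0.bypass_isPath
      have hPi' : ∀ y ∈ p0.bypass.support, y ≠ i' := by
        intro y hy h
        exact hp0 y (Walk.support_bypass_subset _ hy) (by simp [h])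
      have hijz : i ≠ nd z := fun h => hKself i (h ▸ hjzKi)
      obtain ⟨x, hx, r, hr⟩ := Walk.exists_eq_cons_of_ne hijz p0.bypass.reverse
      have hQp : p0.bypass.reverse.IsPath := hPp.reverse
      rw [hr, Walk.cons_isPath_iff] at hQp
      have hxK : x ∈ K i := by
        have hx2 : x ∈ Reach T {i} (nd z) := by
          refine ⟨r.reverse, ?_⟩
          intro y hy hmem
          rw [Set.mem_singleton_iff] at hmem
          subst hmem
          rw [Walk.support_reverse] at hy
          exact hQp.2 (List.mem_reverse.mp hy)
        rw [reach_eq hjzKi] at hx2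
        exact hx2
      have hxnb : x = i' := hnb3 i x hx hxK
      have hxsup : x ∈ p0.bypass.support := by
        have : x ∈ p0.bypass.reverse.support := by
          rw [hr, Walk.support_cons]
          exact List.mem_cons_of_mem _ r.start_mem_support
        rw [Walk.support_reverse] at this
        exact List.mem_reverse.mp this
      exact hPi' x hxsup hxnb
    -- F5 : C i' avoids bag i
    have F5 : ∀ v ∈ C i', v ∉ bag i := fun v hv hvb => F4 (F1 i' v hv i hvb)
    -- C i' ⊆ C i
    intro v hv
    obtain ⟨p1, hp1⟩ := hzi'
    obtain ⟨p2, hp2⟩ := hv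
    have hsup : ∀ x ∈ (p1.reverse.append p2).support, x ∈ C i' := by
      intro x hx
      rcases (Walk.mem_support_append_iff _ _).1 hx with h | h
      · rw [Walk.support_reverse] at h
        exact reach_support p1 hp1 x (List.mem_reverse.mp h)
      · exact reach_support p2 hp2 x h
    have hsup' : ∀ x ∈ (p1.reverse.append p2).support, x ∉ bag i :=
      fun x hx => F5 x (hsup x hx)
    have : v ∈ Reach G (bag i) z := ⟨p1.reverse.append p2, hsup'⟩
    rw [reach_eq hzi] at this
    exact this
  have STEPd : ∀ i, C (nb i) = C i → d (nb i) < d i := by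
    intro i heq
    obtain ⟨j, hj, hval⟩ := hdmem i
    have hjK : j ∈ K i := hJK i hj
    have h3 := F3 i j hjK
    have hJeq : J (nb i) = J i := by
      rw [hJ]
      simp only [heq]
    have hle : d (nb i) ≤ T.dist (nb i) j := by
      apply Nat.sInf_le
      exact ⟨j, by rw [hJeq]; exact hj, rfl⟩
    omega
  -- well-founded descent
  have main : ∀ a b i, (C i).ncard ≤ a → d i ≤ b → False := by
    intro a
    induction a with
    | zero =>
      intro b i h1 _
      have : (C i).Nonempty := ⟨w i, hwC i⟩
      rw [← Set.ncard_pos (Set.toFinite _)] at this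
      omega
    | succ a iha =>
      intro b
      induction b with
      | zero =>
        intro i h1 h2
        have := hd1 i
        omega
      | succ b ihb =>
        intro i h1 h2
        have hsub := STEP i
        have hle : (C (nb i)).ncard ≤ (C i).ncard :=
          Set.ncard_le_ncard hsub (Set.toFinite _)
        by_cases hcase : (C (nb i)).ncard ≤ a
        · exact iha (d (nb i)) (nb i) hcase le_rfl
        · have heq : C (nb i) = C i :=
            Set.eq_of_subset_of_ncard_le hsub (by omega) (Set.toFinite _)
          have hdlt := STEPd i heq
          exact ihb (nb i) (by omega) (by omega)
  obtain ⟨i0⟩ := htree.isConnected.nonempty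
  exact main ((C i0).ncard) (d i0) i0 le_rfl le_rfl

lemma split {V : Type} [Fintype V] (G : SimpleGraph V) (X : Set V) (n : ℕ)
    (hreach : ∀ w, w ∉ X → 2 * (Reach G X w).ncard ≤ n) :
    ∀ (m : ℕ) (S : Set V), S.ncard ≤ m → S ∩ X = ∅ → (∀ w ∈ S, Reach G X w ⊆ S) →
      S.ncard ≤ n →
    ∃ L, L ⊆ S ∧ (∀ w ∈ L, Reach G X w ⊆ L) ∧
      9 * L.ncard ≤ 8 * n ∧ 9 * (S.ncard - L.ncard) ≤ 8 * n := by
  intro m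
  induction m with
  | zero =>
    intro S hm _ _ _
    exact ⟨∅, Set.empty_subset _, by simp, by simp, by omega⟩
  | succ m ih =>
    intro S hm hSX hScl hSn
    by_cases hbig : 9 * S.ncard ≤ 8 * n
    · exact ⟨∅, Set.empty_subset _, by simp, by simp, by simpa using hbig⟩
    have hSne : S.Nonempty :=
      Set.nonempty_of_ncard_ne_zero (fun h0 => hbig (by rw [h0]; omega))
    obtain ⟨w, hw⟩ := hSne
    have hwX : w ∉ X := fun h => by
      have : w ∈ S ∩ X := ⟨hw, h⟩
      rw [hSX] at this
      exact this
    set Cw := Reach G X w with hCw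
    have hwCw : w ∈ Cw := reach_self hwX
    have hCwS : Cw ⊆ S := hScl w hw
    have hCwn : 2 * Cw.ncard ≤ n := hreach w hwX
    have hCw1 : 0 < Cw.ncard := (Set.ncard_pos (Set.toFinite _)).mpr ⟨w, hwCw⟩
    set S' := S \ Cw with hS'
    have hS'card : S'.ncard = S.ncard - Cw.ncard :=
      Set.ncard_diff hCwS (Set.toFinite _)
    have hS'cl : ∀ w' ∈ S', Reach G X w' ⊆ S' := by
      intro w' hw' y hy
      have hw'S : w' ∈ S := hw'.1
      have hyS : y ∈ S := hScl w' hw'S hy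
      refine ⟨hyS, fun hyCw => ?_⟩
      have : Reach G X y = Cw := reach_eq hyCw
      have : w' ∈ Cw := by
        rw [← this, reach_eq hy]
        exact reach_self (fun h => by
          have : w' ∈ S ∩ X := ⟨hw'S, h⟩
          rw [hSX] at this
          exact this)
      exact hw'.2 this
    have hCwcard : Cw.ncard ≤ S.ncard := Set.ncard_le_ncard hCwS (Set.toFinite _)
    have hS'X : S' ∩ X = ∅ := by
      ext x
      simp only [Set.mem_inter_iff, Set.mem_diff, Set.mem_empty_iff_false, iff_false]
      rintro ⟨⟨hx1, _⟩, hx2⟩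
      have hcon : x ∈ S ∩ X := ⟨hx1, hx2⟩
      rw [hSX] at hcon
      exact hcon
    obtain ⟨L', hL'S, hL'cl, hL'1, hL'2⟩ :=
      ih S' (by omega) hS'X hS'cl (by omega)
    have hL'card : L'.ncard ≤ S'.ncard := Set.ncard_le_ncard hL'S (Set.toFinite _)
    have hdisj : Disjoint L' Cw := by
      rw [Set.disjoint_left]
      intro a ha hc
      exact (hL'S ha).2 hc
    by_cases hcase : 9 * (L'.ncard + Cw.ncard) ≤ 8 * n
    · refine ⟨L' ∪ Cw, ?_, ?_, ?_, ?_⟩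
      · exact Set.union_subset (hL'S.trans Set.diff_subset) hCwS
      · intro w' hw'
        rcases hw' with h | h
        · exact (hL'cl w' h).trans Set.subset_union_left
        · have : Reach G X w' = Cw := reach_eq h
          rw [this]
          exact Set.subset_union_right
      · rw [Set.ncard_union_eq hdisj (Set.toFinite _) (Set.toFinite _)]
        exact hcase
      · rw [Set.ncard_union_eq hdisj (Set.toFinite _) (Set.toFinite _)]
        omega
    · refine ⟨L', hL'S.trans Set.diff_subset, hL'cl, hL'1, ?_⟩
      omega

theorem statement13 {V : Type} [Fintype V] (G : SimpleGraph V) (k t : ℕ)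
    (htw : TreewidthAtMost G k)
    (A1 B A2 : Set V)
    (hpart : A1 ∪ B ∪ A2 = Set.univ)
    (h1B : Disjoint A1 B) (h12 : Disjoint A1 A2) (hB2 : Disjoint B A2)
    (hedge : ∀ u ∈ A1, ∀ v ∈ A2, ¬ G.Adj u v)
    (hA1 : 4 * A1.ncard ≤ 3 * Fintype.card V)
    (hA2 : 4 * A2.ncard ≤ 3 * Fintype.card V)
    (hB : B.ncard ≤ t + 1)
    (hn : 36 * (k + t + 2) ≤ Fintype.card V) :
    ∃ L X R : Set V,
      L ∪ X ∪ R = Set.univ ∧ Disjoint L X ∧ Disjoint L R ∧ Disjoint X R ∧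
      (∀ u ∈ L, ∀ v ∈ R, ¬ G.Adj u v) ∧
      X.ncard ≤ k + 1 ∧
      9 * L.ncard ≤ 8 * Fintype.card V ∧
      9 * R.ncard ≤ 8 * Fintype.card V := by
  classical
  obtain ⟨X, hX1, hX2⟩ := separator G k htw
  set n := Fintype.card V with hn
  set S := Xᶜ with hS
  have hSX : S ∩ X = ∅ := Set.compl_inter_self X
  have hScl : ∀ w ∈ S, Reach G X w ⊆ S := by
    intro w _ y hy
    exact reach_disj hy
  have hSn : S.ncard ≤ n := by
    rw [hn, ← Nat.card_eq_fintype_card, ← Set.ncard_univ]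
    exact Set.ncard_le_ncard (Set.subset_univ _) (Set.toFinite _)
  obtain ⟨L, hLS, hLcl, hL1, hL2⟩ :=
    split G X n hX2 S.ncard S le_rfl hSX hScl hSn
  refine ⟨L, X, S \ L, ?_, ?_, ?_, ?_, ?_, hX1, hL1, ?_⟩
  · ext x
    simp only [Set.mem_union, Set.mem_diff, Set.mem_univ, iff_true]
    by_cases hx : x ∈ X
    · exact Or.inl (Or.inr hx)
    · by_cases hxL : x ∈ L
      · exact Or.inl (Or.inl hxL)
      · exact Or.inr ⟨hx, hxL⟩
  · rw [Set.disjoint_left]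
    intro a ha
    exact hLS ha
  · rw [Set.disjoint_left]
    intro a ha h
    exact h.2 ha
  · rw [Set.disjoint_left]
    intro a ha h
    exact h.1 ha
  · intro u hu v hv hadj
    have huX : u ∉ X := hLS hu
    have hvX : v ∉ X := hv.1
    have : v ∈ Reach G X u := reach_adj (reach_self huX) hadj hvX
    exact hv.2 (hLcl u hu this)
  · have : (S \ L).ncard = S.ncard - L.ncard := Set.ncard_diff hLS (Set.toFinite _)
    omega
end
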